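/- arXiv:2110.08605 — 6 statements merged into one kernel-verified Lean document; each statement's English description precedes it below -/
import Mathlib

section
/- (Lemma 1, explicit form.) Assume c := S_{11}·min_{2≤i≤K} S̃_{i·} − 2·max_{2≤j≤K} S_{1j}·S̃_{1·} > 0. Set ε := c·τ_1 / (2·S̃_{1·}·max_{2≤i,j≤K} S_{ij}) and c' := min{ S_{11}/S̃_{1·}, 1/( 2·S̃_{1·}²/c + K·min_{2≤i≤K} S̃_{i·} / max_{2≤i,j≤K} S_{ij} ) }. Then for every nonempty subset C ⊆ {1,…,N} such that (C ⊆ I_1 or I_1 ⊆ C) and |C| ≤ n_1 + ε·N, one has G(C) − G(I_1) ≤ −c' · | |C| − n_1 | / N. -/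
open BigOperators

set_option maxHeartbeats 1000000 in
lemma core_ineq (τ1 S11 St1 minSt maxS1 maxS c ε c' δ T L Q Kr : ℝ)
    (hτ1 : 0 < τ1) (hSt1 : 0 < St1) (hminSt : 0 < minSt) (hmaxS : 0 < maxS)
    (hmaxS1 : 0 < maxS1)
    (hc : c = S11 * minSt - 2 * maxS1 * St1) (hcpos : 0 < c)
    (hε : ε = c * τ1 / (2 * St1 * maxS))
    (hK : 2 ≤ Kr)
    (hc'1 : c' ≤ S11 / St1)
    (hc'2 : c' ≤ 1 / (2 * St1 ^ 2 / c + Kr * minSt / maxS))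
    (hc'pos : 0 < c')
    (hδ0 : 0 ≤ δ) (hδε : δ ≤ ε)
    (hL : L ≤ maxS1 * δ) (hQ : Q ≤ maxS * δ ^ 2) (hT : minSt * δ ≤ T) :
    2 * τ1 * L * St1 + Q * St1 - τ1 * S11 * T + c' * δ * (τ1 * St1 + T) * St1 ≤ 0 := by
  have hS11 : 0 < S11 := by nlinarith
  have hKr : (0:ℝ) < Kr := by linarith
  have hcne : c ≠ 0 := hcpos.ne'
  have hmne : maxS ≠ 0 := hmaxS.ne'
  have hden : 0 < 2 * St1 ^ 2 / c + Kr * minSt / maxS := by positivity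
  have hc'2' : c' * (2 * St1 ^ 2 / c + Kr * minSt / maxS) ≤ 1 := by
    calc c' * (2 * St1 ^ 2 / c + Kr * minSt / maxS)
        ≤ (1 / (2 * St1 ^ 2 / c + Kr * minSt / maxS)) * (2 * St1 ^ 2 / c + Kr * minSt / maxS) := by
          apply mul_le_mul_of_nonneg_right hc'2 hden.le
      _ = 1 := one_div_mul_cancel hden.ne'
  have hc'2m : c' * (2 * St1 ^ 2 * maxS + c * Kr * minSt) ≤ c * maxS := by
    have h := mul_le_mul_of_nonneg_right hc'2' (by positivity : (0:ℝ) ≤ c * maxS)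
    have heq : c' * (2 * St1 ^ 2 / c + Kr * minSt / maxS) * (c * maxS)
        = c' * (2 * St1 ^ 2 * maxS + c * Kr * minSt) := by
      field_simp
    rw [heq, one_mul] at h
    exact h
  have hεm : 2 * St1 * maxS * ε = c * τ1 := by
    rw [hε]; field_simp
  have hc'1m : c' * St1 ≤ S11 := by
    have := mul_le_mul_of_nonneg_right hc'1 hSt1.le
    rwa [div_mul_cancel₀] at this
    exact hSt1.ne'
  have hcm : c' * (c * Kr * minSt) ≤ c * maxS := by
    have h0 : 0 ≤ c' * (2 * St1 ^ 2 * maxS) := by positivity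
    linarith [hc'2m]
  have hcS : c ≤ S11 * minSt := by nlinarith
  have hδSt1 : 2 * St1 * maxS * δ ≤ c * τ1 := by
    have := mul_le_mul_of_nonneg_left hδε (by positivity : (0:ℝ) ≤ 2 * St1 * maxS)
    linarith [hεm ▸ this]
  have hcoef : c' * δ * St1 ≤ τ1 * S11 := by
    have h1 : 2 * maxS * (c' * δ * St1) ≤ c' * (c * τ1) :=
      by linarith [mul_le_mul_of_nonneg_left hδSt1 hc'pos.le]
    have h2 : (c' * (c * τ1)) * (Kr * minSt) ≤ c * maxS * τ1 :=
      by linarith [mul_le_mul_of_nonneg_right hcm hτ1.le]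
    have h3 : c * maxS * τ1 ≤ S11 * minSt * maxS * τ1 :=
      by linarith [mul_le_mul_of_nonneg_right hcS (by positivity : (0:ℝ) ≤ maxS * τ1)]
    have h4 : 2 * maxS * (c' * δ * St1) * (Kr * minSt) ≤ S11 * minSt * maxS * τ1 := by
      have := mul_le_mul_of_nonneg_right h1 (by positivity : (0:ℝ) ≤ Kr * minSt)
      linarith
    have hA1 : 0 ≤ c' * δ * St1 := by positivity
    have h5 : 0 ≤ (Kr - 2) * (maxS * minSt * (c' * δ * St1)) :=
      mul_nonneg (by linarith) (by positivity)
    nlinarith [h4, h5, mul_pos hmaxS hminSt, mul_nonneg (mul_nonneg hmaxS.le hminSt.le) hA1]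
  have hB : -τ1 * c + maxS * δ * St1 + c' * (δ * St1 * minSt + τ1 * St1 ^ 2) ≤ 0 := by
    have b1 : 2 * maxS * (maxS * δ * St1) ≤ maxS * (c * τ1) := by
      linarith [mul_le_mul_of_nonneg_left hδSt1 hmaxS.le]
    have b2 : 2 * maxS * (c' * (δ * St1 * minSt)) ≤ c' * (c * τ1) * minSt := by
      linarith [mul_le_mul_of_nonneg_left hδSt1 (by positivity : (0:ℝ) ≤ c' * minSt)]
    have b4 : 2 * maxS * (c' * (τ1 * St1 ^ 2)) ≤ τ1 * (c * maxS) - c' * (c * τ1) * minSt * Kr := by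
      linarith [mul_le_mul_of_nonneg_left hc'2m hτ1.le]
    have b6 : 0 ≤ c' * (c * τ1) * minSt * (Kr - 1) :=
      mul_nonneg (by positivity) (by linarith)
    nlinarith [b1, b2, b4, b6, mul_pos hmaxS hcpos]
  have e1 : 0 ≤ 2 * τ1 * St1 * (maxS1 * δ - L) := by
    have h : 0 ≤ maxS1 * δ - L := by linarith
    positivity
  have e2 : 0 ≤ St1 * (maxS * δ ^ 2 - Q) := by
    have h : 0 ≤ maxS * δ ^ 2 - Q := by linarith
    positivity
  have e3 : 0 ≤ (τ1 * S11 - c' * δ * St1) * (T - minSt * δ) :=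
    mul_nonneg (by linarith) (by linarith)
  have h4 := mul_le_mul_of_nonneg_left hB hδ0
  subst hc
  nlinarith [e1, e2, e3, h4]

set_option maxHeartbeats 1000000 in
theorem stmt_4 (N K : ℕ) (hN : 1 ≤ N) (hK : 2 ≤ K)
    (g : Fin N → Fin K)
    (k₁ : Fin K) (hk₁ : (k₁ : ℕ) = 0)
    (S : Matrix (Fin K) (Fin K) ℝ) (hSsymm : S.IsSymm) (hSpos : ∀ i j, 0 < S i j)
    (τ : Fin K → ℝ)
    (hτ : ∀ k, τ k = ((Finset.univ.filter fun u => g u = k).card : ℝ) / N)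
    (St : Fin K → ℝ) (hSt : ∀ i, St i = ∑ j, S i j * τ j)
    (I₁ : Finset (Fin N)) (hI₁ : I₁ = Finset.univ.filter fun u => g u = k₁)
    (hI₁ne : I₁.Nonempty)
    (R : Finset (Fin N) → Fin 2 → Fin K → ℝ)
    (hR0 : ∀ C b, R C 0 b = ((C.filter fun u => g u = b).card : ℝ) / N)
    (hR1 : ∀ C b, R C 1 b = (((Cᶜ).filter fun u => g u = b).card : ℝ) / N)
    (G : Finset (Fin N) → ℝ)
    (hG : ∀ C, G C = (∑ i, ∑ j, R C 0 i * S i j * R C 0 j) /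
        ((∑ i, ∑ j, R C 0 i * S i j * R C 0 j) + ∑ i, ∑ j, R C 0 i * S i j * R C 1 j))
    (minSt : ℝ) (hminSt : ∀ i : Fin K, i ≠ k₁ → minSt ≤ St i)
    (hminSt' : ∃ i : Fin K, i ≠ k₁ ∧ minSt = St i)
    (maxS1 : ℝ) (hmaxS1 : ∀ j : Fin K, j ≠ k₁ → S k₁ j ≤ maxS1)
    (hmaxS1' : ∃ j : Fin K, j ≠ k₁ ∧ maxS1 = S k₁ j)
    (maxS : ℝ) (hmaxS : ∀ i j : Fin K, i ≠ k₁ → j ≠ k₁ → S i j ≤ maxS)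
    (hmaxS' : ∃ i j : Fin K, i ≠ k₁ ∧ j ≠ k₁ ∧ maxS = S i j)
    (c : ℝ) (hc : c = S k₁ k₁ * minSt - 2 * maxS1 * St k₁) (hcpos : 0 < c)
    (ε : ℝ) (hε : ε = c * τ k₁ / (2 * St k₁ * maxS))
    (c' : ℝ)
    (hc' : c' = min (S k₁ k₁ / St k₁) (1 / (2 * St k₁ ^ 2 / c + K * minSt / maxS))) :
    ∀ C : Finset (Fin N), C.Nonempty → (C ⊆ I₁ ∨ I₁ ⊆ C) →
      (C.card : ℝ) ≤ (I₁.card : ℝ) + ε * N →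
      G C - G I₁ ≤ -c' * |(C.card : ℝ) - (I₁.card : ℝ)| / N := by
  have hNpos : (0:ℝ) < N := by exact_mod_cast hN
  have hNne : (N:ℝ) ≠ 0 := hNpos.ne'
  have hτnn : ∀ k, 0 ≤ τ k := fun k => by rw [hτ]; positivity
  have hτ1eq : τ k₁ = (I₁.card : ℝ) / N := by rw [hτ, hI₁]
  have hτ1pos : 0 < τ k₁ := by
    rw [hτ1eq]
    have : 0 < I₁.card := Finset.card_pos.mpr hI₁ne
    positivity
  have hStpos : ∀ i, 0 < St i := by
    intro i
    rw [hSt]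
    have h1 : S i k₁ * τ k₁ ≤ ∑ j, S i j * τ j :=
      Finset.single_le_sum (f := fun j => S i j * τ j)
        (fun j _ => mul_nonneg (hSpos i j).le (hτnn j)) (Finset.mem_univ k₁)
    have h2 : 0 < S i k₁ * τ k₁ := mul_pos (hSpos i k₁) hτ1pos
    linarith
  obtain ⟨im, _, hmeq⟩ := hminSt'
  have hminStpos : 0 < minSt := hmeq ▸ hStpos im
  obtain ⟨jm, _, hjeq⟩ := hmaxS1'
  have hmaxS1pos : 0 < maxS1 := hjeq ▸ hSpos k₁ jm
  obtain ⟨i2, j2, _, _, hi2⟩ := hmaxS'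
  have hmaxSpos : 0 < maxS := hi2 ▸ hSpos i2 j2
  have hSt1pos : 0 < St k₁ := hStpos k₁
  have hS11pos : 0 < S k₁ k₁ := hSpos k₁ k₁
  have hKR : (2:ℝ) ≤ (K:ℝ) := by exact_mod_cast hK
  have hc'pos : 0 < c' := by
    rw [hc']
    apply lt_min
    · positivity
    · have : 0 < 2 * St k₁ ^ 2 / c + (K:ℝ) * minSt / maxS := by positivity
      positivity
  have hc'le1 : c' ≤ S k₁ k₁ / St k₁ := hc' ▸ min_le_left _ _
  have hc'le2 : c' ≤ 1 / (2 * St k₁ ^ 2 / c + (K:ℝ) * minSt / maxS) := hc' ▸ min_le_right _ _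
  -- column sums
  have hRsum : ∀ (C : Finset (Fin N)) b, R C 0 b + R C 1 b = τ b := by
    intro C b
    rw [hR0, hR1, hτ, ← add_div]
    congr 1
    have hu : (Finset.univ.filter fun u => g u = b)
        = (C.filter fun u => g u = b) ∪ ((Cᶜ).filter fun u => g u = b) := by
      rw [← Finset.filter_union, Finset.union_compl]
    rw [hu, Finset.card_union_of_disjoint
      (Finset.disjoint_filter_filter disjoint_compl_right)]
    push_cast; ring
  -- denominator identity
  have hdenom : ∀ C : Finset (Fin N),
      (∑ i, ∑ j, R C 0 i * S i j * R C 0 j) + ∑ i, ∑ j, R C 0 i * S i j * R C 1 j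
        = ∑ i, R C 0 i * St i := by
    intro C
    rw [← Finset.sum_add_distrib]
    apply Finset.sum_congr rfl
    intro i _
    rw [← Finset.sum_add_distrib, hSt, Finset.mul_sum]
    apply Finset.sum_congr rfl
    intro j _
    rw [← hRsum C j]; ring
  have hGf : ∀ C : Finset (Fin N),
      G C = (∑ i, ∑ j, R C 0 i * S i j * R C 0 j) / (∑ i, R C 0 i * St i) := by
    intro C; rw [hG, hdenom]
  have hR0nn : ∀ (C : Finset (Fin N)) b, 0 ≤ R C 0 b := by
    intro C b; rw [hR0]; positivity
  -- point-mass evaluation of G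
  have hGpoint : ∀ D : Finset (Fin N), D.Nonempty →
      (∀ b, R D 0 b = if b = k₁ then (D.card:ℝ)/N else 0) →
      G D = ((D.card:ℝ)/N) * S k₁ k₁ / St k₁ := by
    intro D hDne hRD
    rw [hGf D]
    have h1 : ∑ i, ∑ j, R D 0 i * S i j * R D 0 j
        = ((D.card:ℝ)/N) * ((D.card:ℝ)/N) * S k₁ k₁ := by
      simp only [hRD, ite_mul, mul_ite, zero_mul, mul_zero]
      rw [Finset.sum_eq_single k₁]
      · rw [Finset.sum_eq_single k₁]
        · simp; ring
        · intro b _ hb; simp [hb]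
        · intro h; exact absurd (Finset.mem_univ k₁) h
      · intro b _ hb
        apply Finset.sum_eq_zero
        intro j _
        simp [hb]
      · intro h; exact absurd (Finset.mem_univ k₁) h
    have h2 : ∑ i, R D 0 i * St i = ((D.card:ℝ)/N) * St k₁ := by
      simp only [hRD, ite_mul, zero_mul]
      rw [Finset.sum_eq_single k₁]
      · simp
      · intro b _ hb; simp [hb]
      · intro h; exact absurd (Finset.mem_univ k₁) h
    rw [h1, h2]
    have hm : (0:ℝ) < (D.card:ℝ)/N := by
      have : 0 < D.card := Finset.card_pos.mpr hDne
      positivity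
    field_simp
  have hRI : ∀ b, R I₁ 0 b = if b = k₁ then (I₁.card:ℝ)/N else 0 := by
    intro b
    rw [hR0]
    by_cases hb : b = k₁
    · rw [if_pos hb]
      have hf : (I₁.filter fun u => g u = b) = I₁ := by
        apply Finset.filter_true_of_mem
        intro u hu
        rw [hI₁] at hu
        rw [hb]
        exact (Finset.mem_filter.mp hu).2
      rw [hf]
    · rw [if_neg hb]
      have : (I₁.filter fun u => g u = b) = ∅ := by
        apply Finset.filter_false_of_mem
        intro u hu h
        rw [hI₁] at hu
        exact hb ((Finset.mem_filter.mp hu).2 ▸ h.symm ▸ rfl)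
      rw [this]; simp
  have hGI : G I₁ = ((I₁.card:ℝ)/N) * S k₁ k₁ / St k₁ := hGpoint I₁ hI₁ne hRI
  intro C hCne hsub hcard
  rcases hsub with hsubC | hsupC
  · -- C ⊆ I₁
    have hRC : ∀ b, R C 0 b = if b = k₁ then (C.card:ℝ)/N else 0 := by
      intro b
      rw [hR0]
      by_cases hb : b = k₁
      · rw [if_pos hb]
        have hf : (C.filter fun u => g u = b) = C := by
          apply Finset.filter_true_of_mem
          intro u hu
          have := hsubC hu
          rw [hI₁] at this
          rw [hb]
          exact (Finset.mem_filter.mp this).2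
        rw [hf]
      · rw [if_neg hb]
        have : (C.filter fun u => g u = b) = ∅ := by
          apply Finset.filter_false_of_mem
          intro u hu h
          have := hsubC hu
          rw [hI₁] at this
          exact hb ((Finset.mem_filter.mp this).2 ▸ h.symm ▸ rfl)
        rw [this]; simp
    have hGC : G C = ((C.card:ℝ)/N) * S k₁ k₁ / St k₁ := hGpoint C hCne hRC
    have hle : (C.card:ℝ) ≤ (I₁.card:ℝ) := by exact_mod_cast Finset.card_le_card hsubC
    have habs : |(C.card : ℝ) - (I₁.card : ℝ)| = (I₁.card:ℝ) - (C.card:ℝ) := by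
      rw [abs_of_nonpos (by linarith)]; ring
    rw [hGC, hGI, habs]
    have hd0 : 0 ≤ (I₁.card:ℝ)/N - (C.card:ℝ)/N := by
      apply sub_nonneg.mpr
      gcongr
    have h := mul_le_mul_of_nonneg_left hc'le1 hd0
    have e1 : (C.card:ℝ)/N * S k₁ k₁ / St k₁ - (I₁.card:ℝ)/N * S k₁ k₁ / St k₁
        = -(((I₁.card:ℝ)/N - (C.card:ℝ)/N) * (S k₁ k₁ / St k₁)) := by
      ring
    have e2 : -c' * ((I₁.card:ℝ) - (C.card:ℝ)) / N
        = -(((I₁.card:ℝ)/N - (C.card:ℝ)/N) * c') := by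
      field_simp
      try ring
      try tauto
    rw [e1, e2]
    linarith
  · -- I₁ ⊆ C
    have hxk1 : R C 0 k₁ = τ k₁ := by
      rw [hR0, hτ1eq]
      have hf : (C.filter fun u => g u = k₁) = I₁ := by
        rw [hI₁]
        ext u
        simp only [Finset.mem_filter, Finset.mem_univ, true_and]
        constructor
        · exact fun h => h.2
        · intro h
          refine ⟨hsupC ?_, h⟩
          rw [hI₁]
          exact Finset.mem_filter.mpr ⟨Finset.mem_univ u, h⟩
      rw [hf]
    have hk1mem : k₁ ∈ (Finset.univ : Finset (Fin K)) := Finset.mem_univ k₁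
    set E : Finset (Fin K) := Finset.univ.erase k₁ with hE
    set δ : ℝ := ∑ b ∈ E, R C 0 b with hδdef
    have hsplit : ∀ f : Fin K → ℝ, ∑ i, f i = f k₁ + ∑ i ∈ E, f i := by
      intro f
      rw [hE]
      exact (Finset.add_sum_erase _ f hk1mem).symm
    have hsumx : ∑ b, R C 0 b = (C.card:ℝ)/N := by
      have hcf := Finset.card_eq_sum_card_fiberwise
        (f := g) (s := C) (t := Finset.univ) (fun u _ => Finset.mem_univ (g u))
      have : ∑ b, R C 0 b = ∑ b, ((C.filter fun u => g u = b).card : ℝ) / N := by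
        apply Finset.sum_congr rfl; intro b _; rw [hR0]
      rw [this, ← Finset.sum_div]
      congr 1
      rw [hcf]
      push_cast
      rfl
    have hδeq : δ = (C.card:ℝ)/N - τ k₁ := by
      have := hsplit (fun b => R C 0 b)
      rw [hsumx, hxk1] at this
      rw [hδdef]; linarith
    have hIC : (I₁.card:ℝ) ≤ (C.card:ℝ) := by exact_mod_cast Finset.card_le_card hsupC
    have hδ0 : 0 ≤ δ := by
      rw [hδeq, hτ1eq]
      have : (I₁.card:ℝ)/N ≤ (C.card:ℝ)/N := by gcongr
      linarith
    have hδε : δ ≤ ε := by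
      rw [hδeq, hτ1eq]
      rw [div_sub_div_same, div_le_iff₀ hNpos] at *
      linarith [hcard]
    set L : ℝ := ∑ b ∈ E, S k₁ b * R C 0 b with hLdef
    set T : ℝ := ∑ b ∈ E, R C 0 b * St b with hTdef
    set Q : ℝ := ∑ i ∈ E, ∑ j ∈ E, R C 0 i * S i j * R C 0 j with hQdef
    have hSsy : ∀ i j, S i j = S j i := fun i j => hSsymm.apply j i
    have hA : ∑ i, ∑ j, R C 0 i * S i j * R C 0 j
        = τ k₁ ^ 2 * S k₁ k₁ + 2 * τ k₁ * L + Q := by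
      rw [hsplit (fun i => ∑ j, R C 0 i * S i j * R C 0 j)]
      rw [hsplit (fun j => R C 0 k₁ * S k₁ j * R C 0 j)]
      have h1 : ∑ j ∈ E, R C 0 k₁ * S k₁ j * R C 0 j = τ k₁ * L := by
        rw [hLdef, Finset.mul_sum]
        apply Finset.sum_congr rfl
        intro j _
        rw [hxk1]; ring
      have h2 : ∑ i ∈ E, ∑ j, R C 0 i * S i j * R C 0 j = τ k₁ * L + Q := by
        have h3 : ∀ i ∈ E, ∑ j, R C 0 i * S i j * R C 0 j
            = τ k₁ * (S k₁ i * R C 0 i) + ∑ j ∈ E, R C 0 i * S i j * R C 0 j := by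
          intro i _
          rw [hsplit (fun j => R C 0 i * S i j * R C 0 j)]
          congr 1
          rw [hxk1, hSsy i k₁]; ring
        rw [Finset.sum_congr rfl h3, Finset.sum_add_distrib, ← Finset.mul_sum]
      rw [h1, h2, hxk1]
      ring
    have hD : ∑ i, R C 0 i * St i = τ k₁ * St k₁ + T := by
      rw [hsplit (fun i => R C 0 i * St i), hxk1]
    -- bounds
    have hLb : L ≤ maxS1 * δ := by
      rw [hLdef, hδdef, Finset.mul_sum]
      apply Finset.sum_le_sum
      intro b hb
      have hbne : b ≠ k₁ := Finset.ne_of_mem_erase hb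
      exact mul_le_mul_of_nonneg_right (hmaxS1 b hbne) (hR0nn C b)
    have hTb : minSt * δ ≤ T := by
      rw [hTdef, hδdef, Finset.mul_sum]
      apply Finset.sum_le_sum
      intro b hb
      have hbne : b ≠ k₁ := Finset.ne_of_mem_erase hb
      calc minSt * R C 0 b ≤ St b * R C 0 b :=
            mul_le_mul_of_nonneg_right (hminSt b hbne) (hR0nn C b)
        _ = R C 0 b * St b := mul_comm _ _
    have hQb : Q ≤ maxS * δ ^ 2 := by
      have step1 : Q ≤ ∑ i ∈ E, ∑ j ∈ E, R C 0 i * maxS * R C 0 j := by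
        rw [hQdef]
        apply Finset.sum_le_sum
        intro i hi
        apply Finset.sum_le_sum
        intro j hj
        have hine : i ≠ k₁ := Finset.ne_of_mem_erase hi
        have hjne : j ≠ k₁ := Finset.ne_of_mem_erase hj
        have := hmaxS i j hine hjne
        have h1 : R C 0 i * S i j ≤ R C 0 i * maxS :=
          mul_le_mul_of_nonneg_left this (hR0nn C i)
        exact mul_le_mul_of_nonneg_right h1 (hR0nn C j)
      have step2 : ∑ i ∈ E, ∑ j ∈ E, R C 0 i * maxS * R C 0 j = maxS * δ ^ 2 := by
        have : ∀ i ∈ E, ∑ j ∈ E, R C 0 i * maxS * R C 0 j = R C 0 i * (maxS * δ) := by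
          intro i _
          rw [hδdef, Finset.mul_sum, Finset.mul_sum]
          apply Finset.sum_congr rfl
          intro j _; ring
        rw [Finset.sum_congr rfl this, ← Finset.sum_mul, ← hδdef]
        ring
      linarith
    -- core inequality
    have key := core_ineq (τ k₁) (S k₁ k₁) (St k₁) minSt maxS1 maxS c ε c' δ T L Q (K:ℝ)
      hτ1pos hSt1pos hminStpos hmaxSpos hmaxS1pos hc hcpos hε hKR hc'le1 hc'le2 hc'pos
      hδ0 hδε hLb hQb hTb
    have hTnn : 0 ≤ T := le_trans (mul_nonneg hminStpos.le hδ0) hTb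
    have hDpos : 0 < τ k₁ * St k₁ + T := by
      have := mul_pos hτ1pos hSt1pos
      linarith
    have hGC : G C = (τ k₁ ^ 2 * S k₁ k₁ + 2 * τ k₁ * L + Q) / (τ k₁ * St k₁ + T) := by
      rw [hGf C, hA, hD]
    have habs : |(C.card : ℝ) - (I₁.card : ℝ)| = δ * N := by
      rw [abs_of_nonneg (by linarith), hδeq, hτ1eq]
      field_simp
      try ring
      try tauto
    rw [hGC, hGI, habs, ← hτ1eq]
    have hrhs : -c' * (δ * N) / N = -(c' * δ) := by
      field_simp
      try ring
      try tauto
    rw [hrhs]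
    have hnum : (τ k₁ ^ 2 * S k₁ k₁ + 2 * τ k₁ * L + Q) * St k₁
        - τ k₁ * S k₁ k₁ * (τ k₁ * St k₁ + T) + c' * δ * (τ k₁ * St k₁ + T) * St k₁ ≤ 0 := by
      linarith [key]
    have hexp : (τ k₁ ^ 2 * S k₁ k₁ + 2 * τ k₁ * L + Q) / (τ k₁ * St k₁ + T)
        - τ k₁ * S k₁ k₁ / St k₁ + c' * δ
        = ((τ k₁ ^ 2 * S k₁ k₁ + 2 * τ k₁ * L + Q) * St k₁
          - τ k₁ * S k₁ k₁ * (τ k₁ * St k₁ + T) + c' * δ * (τ k₁ * St k₁ + T) * St k₁)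
          / ((τ k₁ * St k₁ + T) * St k₁) := by
      field_simp
    have hfinal : (τ k₁ ^ 2 * S k₁ k₁ + 2 * τ k₁ * L + Q) / (τ k₁ * St k₁ + T)
        - τ k₁ * S k₁ k₁ / St k₁ + c' * δ ≤ 0 := by
      rw [hexp]
      apply div_nonpos_of_nonpos_of_nonneg hnum
      positivity
    linarith
end

section
/- (Lemma 1, Case n > n_1.) Assume c := S_{11}·min_{2≤i≤K} S̃_{i·} − 2·max_{2≤j≤K} S_{1j}·S̃_{1·} > 0 and set ε := c·τ_1 / (2·S̃_{1·}·max_{2≤i,j≤K} S_{ij}). Then for every subset C ⊆ {1,…,N} with I_1 ⊆ C and |C| − n_1 ≤ ε·N, one has G(C) − G(I_1) ≤ −( 2·S̃_{1·}²/c + K·min_{2≤i≤K} S̃_{i·} / max_{2≤i,j≤K} S_{ij} )^{-1} · (|C| − n_1)/N. -/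
open BigOperators

set_option maxHeartbeats 1000000 in
theorem stmt_5 (N K : ℕ) (hN : 1 ≤ N) (hK : 2 ≤ K)
    (g : Fin N → Fin K)
    (k₁ : Fin K) (hk₁ : (k₁ : ℕ) = 0)
    (S : Matrix (Fin K) (Fin K) ℝ) (hSsymm : S.IsSymm) (hSpos : ∀ i j, 0 < S i j)
    (τ : Fin K → ℝ)
    (hτ : ∀ k, τ k = ((Finset.univ.filter fun u => g u = k).card : ℝ) / N)
    (St : Fin K → ℝ) (hSt : ∀ i, St i = ∑ j, S i j * τ j)
    (I₁ : Finset (Fin N)) (hI₁ : I₁ = Finset.univ.filter fun u => g u = k₁)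
    (hI₁ne : I₁.Nonempty)
    (R : Finset (Fin N) → Fin 2 → Fin K → ℝ)
    (hR0 : ∀ C b, R C 0 b = ((C.filter fun u => g u = b).card : ℝ) / N)
    (hR1 : ∀ C b, R C 1 b = (((Cᶜ).filter fun u => g u = b).card : ℝ) / N)
    (G : Finset (Fin N) → ℝ)
    (hG : ∀ C, G C = (∑ i, ∑ j, R C 0 i * S i j * R C 0 j) /
        ((∑ i, ∑ j, R C 0 i * S i j * R C 0 j) + ∑ i, ∑ j, R C 0 i * S i j * R C 1 j))
    (minSt : ℝ) (hminSt : ∀ i : Fin K, i ≠ k₁ → minSt ≤ St i)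
    (hminSt' : ∃ i : Fin K, i ≠ k₁ ∧ minSt = St i)
    (maxS1 : ℝ) (hmaxS1 : ∀ j : Fin K, j ≠ k₁ → S k₁ j ≤ maxS1)
    (hmaxS1' : ∃ j : Fin K, j ≠ k₁ ∧ maxS1 = S k₁ j)
    (maxS : ℝ) (hmaxS : ∀ i j : Fin K, i ≠ k₁ → j ≠ k₁ → S i j ≤ maxS)
    (hmaxS' : ∃ i j : Fin K, i ≠ k₁ ∧ j ≠ k₁ ∧ maxS = S i j)
    (c : ℝ) (hc : c = S k₁ k₁ * minSt - 2 * maxS1 * St k₁) (hcpos : 0 < c)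
    (ε : ℝ) (hε : ε = c * τ k₁ / (2 * St k₁ * maxS)) :
    ∀ C : Finset (Fin N), I₁ ⊆ C →
      (C.card : ℝ) - (I₁.card : ℝ) ≤ ε * N →
      G C - G I₁ ≤
        -(2 * St k₁ ^ 2 / c + K * minSt / maxS)⁻¹ *
          ((C.card : ℝ) - (I₁.card : ℝ)) / N := by
  -- basic positivity
  have hNpos : (0:ℝ) < N := by exact_mod_cast hN
  have hNne : (N:ℝ) ≠ 0 := ne_of_gt hNpos
  have hτnn : ∀ k, 0 ≤ τ k := by
    intro k; rw [hτ]; positivity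
  have hτ1pos : 0 < τ k₁ := by
    rw [hτ]
    have : 0 < (Finset.univ.filter fun u => g u = k₁).card := by
      rw [← hI₁]; exact Finset.card_pos.mpr hI₁ne
    have h' : (0:ℝ) < (Finset.univ.filter fun u => g u = k₁).card := by exact_mod_cast this
    exact div_pos h' hNpos
  have hStpos : ∀ i, 0 < St i := by
    intro i
    rw [hSt]
    apply Finset.sum_pos'
    · intro j _; exact mul_nonneg (le_of_lt (hSpos i j)) (hτnn j)
    · exact ⟨k₁, Finset.mem_univ _, mul_pos (hSpos i k₁) hτ1pos⟩
  have hminStpos : 0 < minSt := by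
    obtain ⟨i, _, hi⟩ := hminSt'; rw [hi]; exact hStpos i
  have hmaxS1pos : 0 < maxS1 := by
    obtain ⟨j, _, hj⟩ := hmaxS1'; rw [hj]; exact hSpos _ _
  have hmaxSpos : 0 < maxS := by
    obtain ⟨i, j, _, _, hij⟩ := hmaxS'; rw [hij]; exact hSpos _ _
  have hcne : c ≠ 0 := ne_of_gt hcpos
  have hmaxSne : maxS ≠ 0 := ne_of_gt hmaxSpos
  have hKR : (2:ℝ) ≤ K := by exact_mod_cast hK
  set M : ℝ := 2 * St k₁ ^ 2 / c + K * minSt / maxS with hM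
  clear_value M
  have hMpos : 0 < M := by
    rw [hM]
    have h1 : 0 < 2 * St k₁ ^ 2 / c :=
      div_pos (by nlinarith [hStpos k₁]) hcpos
    have h2 : 0 ≤ (K:ℝ) * minSt / maxS :=
      div_nonneg (mul_nonneg (by linarith) (le_of_lt hminStpos)) (le_of_lt hmaxSpos)
    linarith
  -- R C 0 b + R C 1 b = τ b for all C
  have hRsum : ∀ (C : Finset (Fin N)) (b : Fin K), R C 0 b + R C 1 b = τ b := by
    intro C b
    rw [hR0, hR1, hτ, ← add_div]
    congr 1
    have : (C.filter fun u => g u = b).card + ((Cᶜ).filter fun u => g u = b).card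
        = (Finset.univ.filter fun u => g u = b).card := by
      rw [← Finset.card_union_of_disjoint
        (Finset.disjoint_filter_filter disjoint_compl_right),
        ← Finset.filter_union, Finset.union_compl]
    exact_mod_cast this
  -- denominator identity for all C
  have hden : ∀ C : Finset (Fin N),
      (∑ i, ∑ j, R C 0 i * S i j * R C 0 j) + ∑ i, ∑ j, R C 0 i * S i j * R C 1 j
        = ∑ i, R C 0 i * St i := by
    intro C
    rw [← Finset.sum_add_distrib]
    apply Finset.sum_congr rfl
    intro i _
    rw [← Finset.sum_add_distrib, hSt, Finset.mul_sum]
    apply Finset.sum_congr rfl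
    intro j _
    rw [← hRsum C j]
    ring
  -- values of R I₁ 0
  have hRI : ∀ b, R I₁ 0 b = if b = k₁ then τ k₁ else 0 := by
    intro b
    by_cases hb : b = k₁
    · subst hb
      rw [hR0, if_pos rfl, hτ]
      congr 2
      rw [hI₁, Finset.filter_filter]
      simp
    · rw [hR0, if_neg hb]
      have : I₁.filter (fun u => g u = b) = ∅ := by
        apply Finset.filter_eq_empty_iff.mpr
        intro u hu
        rw [hI₁] at hu
        simp only [Finset.mem_filter] at hu
        rw [hu.2]
        exact fun h => hb h.symm
      rw [this]
      simp
  have hGI : G I₁ = S k₁ k₁ * τ k₁ / St k₁ := by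
    rw [hG, hden]
    have h1 : (∑ i, ∑ j, R I₁ 0 i * S i j * R I₁ 0 j) = τ k₁ * S k₁ k₁ * τ k₁ := by
      simp [hRI, ite_mul, zero_mul, mul_ite, mul_zero, Finset.sum_ite_eq']
    have h2 : (∑ i, R I₁ 0 i * St i) = τ k₁ * St k₁ := by
      simp [hRI, ite_mul, zero_mul, Finset.sum_ite_eq']
    rw [h1, h2]
    rw [div_eq_div_iff (ne_of_gt (mul_pos hτ1pos (hStpos k₁))) (ne_of_gt (hStpos k₁))]
    ring
  intro C hsub hcard
  -- the filter of C at k₁ is exactly I₁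
  have hfil : C.filter (fun u => g u = k₁) = I₁ := by
    ext u
    simp only [Finset.mem_filter, hI₁, Finset.mem_univ, true_and]
    exact ⟨fun h => h.2, fun h => ⟨hsub (by rw [hI₁]; simp [h]), h⟩⟩
  set x : Fin K → ℝ := R C 0 with hx
  have hxnn : ∀ b, 0 ≤ x b := by
    intro b; rw [hx, hR0]; positivity
  have hτI : τ k₁ = (I₁.card : ℝ) / N := by rw [hτ, hI₁]
  have hxk : x k₁ = τ k₁ := by
    rw [hx, hR0, hfil, hτI]
  set e : Finset (Fin K) := Finset.univ.erase k₁ with he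
  have hmem_e : ∀ b ∈ e, b ≠ k₁ := fun b hb => Finset.ne_of_mem_erase hb
  have hsplit : ∀ f : Fin K → ℝ, ∑ b, f b = f k₁ + ∑ b ∈ e, f b := by
    intro f
    rw [he]
    exact (Finset.add_sum_erase _ f (Finset.mem_univ k₁)).symm
  set δ : ℝ := ∑ b ∈ e, x b with hδdef
  have hδnn : 0 ≤ δ := Finset.sum_nonneg fun b _ => hxnn b
  have hsumx : ∑ b, x b = (C.card : ℝ) / N := by
    have hcards : (∑ b, ((C.filter fun u => g u = b).card : ℝ)) = (C.card : ℝ) := by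
      rw [← Nat.cast_sum]
      congr 1
      exact (Finset.card_eq_sum_card_fiberwise (fun u _ => Finset.mem_univ (g u))).symm
    calc ∑ b, x b = ∑ b, ((C.filter fun u => g u = b).card : ℝ) / N := by
          apply Finset.sum_congr rfl; intro b _; rw [hx, hR0]
      _ = (∑ b, ((C.filter fun u => g u = b).card : ℝ)) / N := by rw [Finset.sum_div]
      _ = (C.card : ℝ) / N := by rw [hcards]
  have hδval : δ = ((C.card : ℝ) - (I₁.card : ℝ)) / N := by
    have h := hsplit x
    rw [hsumx, hxk, hτI] at h
    rw [sub_div]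
    linarith [h]
  have hδε : δ ≤ ε := by
    rw [hδval, div_le_iff₀ hNpos]
    exact hcard
  have hεc : 2 * St k₁ * maxS * δ ≤ c * τ k₁ := by
    have h2 : 0 < 2 * St k₁ * maxS := mul_pos (mul_pos two_pos (hStpos k₁)) hmaxSpos
    rw [hε] at hδε
    have := (le_div_iff₀ h2).mp hδε
    nlinarith [this]
  have hε2 : 0 ≤ c * τ k₁ - 2 * St k₁ * maxS * δ := by linarith
  -- L, Q, T
  set L : ℝ := ∑ b ∈ e, S k₁ b * x b with hLdef
  set Q : ℝ := ∑ i ∈ e, ∑ j ∈ e, x i * S i j * x j with hQdef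
  set T : ℝ := ∑ b ∈ e, x b * St b with hTdef
  have hLb : L ≤ maxS1 * δ := by
    rw [hLdef, hδdef, Finset.mul_sum]
    apply Finset.sum_le_sum
    intro b hb
    exact mul_le_mul_of_nonneg_right (hmaxS1 b (hmem_e b hb)) (hxnn b)
  have hQnn : 0 ≤ Q := Finset.sum_nonneg fun i _ => Finset.sum_nonneg fun j _ =>
    mul_nonneg (mul_nonneg (hxnn i) (le_of_lt (hSpos i j))) (hxnn j)
  have hQb : Q ≤ maxS * δ ^ 2 := by
    have h1 : Q ≤ ∑ i ∈ e, ∑ j ∈ e, maxS * (x i * x j) := by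
      apply Finset.sum_le_sum; intro i hi
      apply Finset.sum_le_sum; intro j hj
      have hs := hmaxS i j (hmem_e i hi) (hmem_e j hj)
      calc x i * S i j * x j = S i j * (x i * x j) := by ring
        _ ≤ maxS * (x i * x j) :=
          mul_le_mul_of_nonneg_right hs (mul_nonneg (hxnn i) (hxnn j))
    have h2 : (∑ i ∈ e, ∑ j ∈ e, maxS * (x i * x j)) = maxS * (δ * δ) := by
      rw [hδdef, Finset.sum_mul_sum, Finset.mul_sum]
      apply Finset.sum_congr rfl; intro i _
      rw [Finset.mul_sum]
    calc Q ≤ _ := h1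
      _ = maxS * (δ * δ) := h2
      _ = maxS * δ ^ 2 := by ring
  have hTb : minSt * δ ≤ T := by
    rw [hTdef, hδdef, Finset.mul_sum]
    apply Finset.sum_le_sum
    intro b hb
    have h1 := hminSt b (hmem_e b hb)
    calc minSt * x b = x b * minSt := by ring
      _ ≤ x b * St b := mul_le_mul_of_nonneg_left h1 (hxnn b)
  have hTnn : 0 ≤ T := Finset.sum_nonneg fun b _ =>
    mul_nonneg (hxnn b) (le_of_lt (hStpos b))
  -- A and D
  set A : ℝ := ∑ i, ∑ j, x i * S i j * x j with hAdef
  set D : ℝ := ∑ i, x i * St i with hDdef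
  have hSym : ∀ i j, S i j = S j i := fun i j => (hSsymm.apply i j).symm
  have hA : A = τ k₁ ^ 2 * S k₁ k₁ + 2 * τ k₁ * L + Q := by
    have houter := hsplit (fun i => ∑ j, x i * S i j * x j)
    have hinner1 : (∑ j, x k₁ * S k₁ j * x j)
        = τ k₁ * S k₁ k₁ * τ k₁ + τ k₁ * L := by
      rw [hsplit (fun j => x k₁ * S k₁ j * x j), hxk, hLdef, Finset.mul_sum]
      congr 1
      apply Finset.sum_congr rfl; intro j _; ring
    have hinner2 : (∑ i ∈ e, ∑ j, x i * S i j * x j)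
        = τ k₁ * L + Q := by
      have h3 : ∀ i ∈ e, (∑ j, x i * S i j * x j)
          = x i * S k₁ i * τ k₁ + ∑ j ∈ e, x i * S i j * x j := by
        intro i _
        rw [hsplit (fun j => x i * S i j * x j), hxk, hSym i k₁]
      rw [Finset.sum_congr rfl h3, Finset.sum_add_distrib]
      congr 1
      rw [hLdef, Finset.mul_sum]
      apply Finset.sum_congr rfl; intro i _; ring
    rw [hAdef, houter, hinner1, hinner2]
    ring
  have hD : D = τ k₁ * St k₁ + T := by
    rw [hDdef, hsplit (fun i => x i * St i), hxk, hTdef]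
  have hDpos : 0 < D := by
    rw [hD]
    have := mul_pos hτ1pos (hStpos k₁)
    linarith
  have hGC : G C = A / D := by
    rw [hG, hden, hAdef, hDdef, hx]
  -- the key numerator inequality
  have hMne : M ≠ 0 := ne_of_gt hMpos
  have hMc : M * (c * maxS) = 2 * St k₁ ^ 2 * maxS + K * minSt * c := by
    rw [hM]
    field_simp
  set P : ℝ := 2 * St k₁ ^ 2 * maxS + K * minSt * c with hP
  clear_value P
  have hPnn : 0 ≤ P := by
    rw [hP]
    have h1 : 0 ≤ 2 * St k₁ ^ 2 * maxS := by positivity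
    have h2 : 0 ≤ (K : ℝ) * minSt * c := by
      apply mul_nonneg (mul_nonneg (by linarith) hminStpos.le) hcpos.le
    linarith
  have hcoef : c * maxS * δ * St k₁ ≤ P * (S k₁ k₁ * τ k₁) := by
    have h1 : c * (2 * St k₁ * maxS * δ) ≤ c * (c * τ k₁) :=
      mul_le_mul_of_nonneg_left hεc hcpos.le
    have h2 : c ≤ S k₁ k₁ * minSt := by
      have := mul_pos hmaxS1pos (hStpos k₁)
      rw [hc]; linarith
    have h3 : c * (c * τ k₁) ≤ S k₁ k₁ * minSt * (c * τ k₁) :=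
      mul_le_mul_of_nonneg_right h2 (mul_pos hcpos hτ1pos).le
    have h4 : 0 ≤ ((K : ℝ) - 2) * (minSt * c * (S k₁ k₁ * τ k₁)) := by
      apply mul_nonneg (by linarith)
      apply mul_nonneg (mul_nonneg hminStpos.le hcpos.le)
      exact (mul_pos (hSpos k₁ k₁) hτ1pos).le
    have h5 : 0 ≤ 2 * St k₁ ^ 2 * maxS * (S k₁ k₁ * τ k₁) := by
      apply mul_nonneg (by positivity) (mul_pos (hSpos k₁ k₁) hτ1pos).le
    have h6 : 0 ≤ minSt * c * (S k₁ k₁ * τ k₁) := by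
      apply mul_nonneg (mul_nonneg hminStpos.le hcpos.le)
      exact (mul_pos (hSpos k₁ k₁) hτ1pos).le
    rw [hP]
    linarith only [h1, h3, h4, h5, h6]
  have hstep1 : P * (St k₁ * (2 * τ k₁ * L + Q))
      ≤ P * (St k₁ * (2 * τ k₁ * (maxS1 * δ) + maxS * δ ^ 2)) := by
    apply mul_le_mul_of_nonneg_left _ hPnn
    apply mul_le_mul_of_nonneg_left _ (hStpos k₁).le
    have := mul_le_mul_of_nonneg_left hLb (by linarith [hτ1pos] : (0:ℝ) ≤ 2 * τ k₁)
    linarith [hQb]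
  have hstep2 : T * (c * maxS * δ * St k₁ - P * (S k₁ k₁ * τ k₁))
      ≤ (minSt * δ) * (c * maxS * δ * St k₁ - P * (S k₁ k₁ * τ k₁)) := by
    apply mul_le_mul_of_nonpos_right hTb
    linarith [hcoef]
  have hbracketF : P * (St k₁ * (2 * τ k₁ * (maxS1 * δ) + maxS * δ ^ 2))
      + (minSt * δ) * (c * maxS * δ * St k₁ - P * (S k₁ k₁ * τ k₁))
      + c * maxS * δ * (τ k₁ * St k₁) * St k₁ ≤ 0 := by
    have heq : P * (St k₁ * (2 * τ k₁ * (maxS1 * δ) + maxS * δ ^ 2))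
        + (minSt * δ) * (c * maxS * δ * St k₁ - P * (S k₁ k₁ * τ k₁))
        + c * maxS * δ * (τ k₁ * St k₁) * St k₁
        = δ * (-(P * τ k₁ * c) + P * St k₁ * maxS * δ
            + minSt * c * maxS * δ * St k₁ + c * maxS * τ k₁ * St k₁ ^ 2) := by
      linear_combination (P * δ * τ k₁) * hc
    have hmcnn : 0 ≤ minSt * c := mul_nonneg hminStpos.le hcpos.le
    have g1 : St k₁ ^ 2 * maxS * (2 * St k₁ * maxS * δ) ≤ St k₁ ^ 2 * maxS * (c * τ k₁) :=
      mul_le_mul_of_nonneg_left hεc (by positivity)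
    have g2 : (K : ℝ) * (minSt * c * (2 * St k₁ * maxS * δ))
        ≤ (K : ℝ) * (minSt * c * (c * τ k₁)) :=
      mul_le_mul_of_nonneg_left (mul_le_mul_of_nonneg_left hεc hmcnn) (by linarith)
    have g3 : minSt * c * (2 * St k₁ * maxS * δ) ≤ minSt * c * (c * τ k₁) :=
      mul_le_mul_of_nonneg_left hεc hmcnn
    have g4 : minSt * c ^ 2 * τ k₁ ≤ (K : ℝ) * (minSt * c ^ 2 * τ k₁) := by
      have hkk : (1:ℝ) ≤ (K : ℝ) := by linarith
      have hnn : 0 ≤ minSt * c ^ 2 * τ k₁ := by positivity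
      exact le_mul_of_one_le_left hnn hkk
    have hB : -(P * τ k₁ * c) + P * St k₁ * maxS * δ
        + minSt * c * maxS * δ * St k₁ + c * maxS * τ k₁ * St k₁ ^ 2 ≤ 0 := by
      rw [hP]
      linarith only [g1, g2, g3, g4]
    rw [heq]
    exact mul_nonpos_of_nonneg_of_nonpos hδnn hB
  have hNUM : M * (A * St k₁ - S k₁ k₁ * τ k₁ * D) + δ * D * St k₁ ≤ 0 := by
    have hNUMeq : (M * (A * St k₁ - S k₁ k₁ * τ k₁ * D) + δ * D * St k₁) * (c * maxS)
        = P * (St k₁ * (2 * τ k₁ * L + Q))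
          + T * (c * maxS * δ * St k₁ - P * (S k₁ k₁ * τ k₁))
          + c * maxS * δ * (τ k₁ * St k₁) * St k₁ := by
      have hW : (M * (A * St k₁ - S k₁ k₁ * τ k₁ * D) + δ * D * St k₁) * (c * maxS)
          = P * (A * St k₁ - S k₁ k₁ * τ k₁ * D) + δ * D * St k₁ * (c * maxS) := by
        linear_combination (A * St k₁ - S k₁ k₁ * τ k₁ * D) * hMc
      rw [hW, hA, hD]
      ring
    have hkey2 : (M * (A * St k₁ - S k₁ k₁ * τ k₁ * D) + δ * D * St k₁) * (c * maxS) ≤ 0 := by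
      rw [hNUMeq]
      linarith only [hstep1, hstep2, hbracketF]
    have h0 : (M * (A * St k₁ - S k₁ k₁ * τ k₁ * D) + δ * D * St k₁) * (c * maxS)
        ≤ 0 * (c * maxS) := by rw [zero_mul]; exact hkey2
    exact le_of_mul_le_mul_right h0 (mul_pos hcpos hmaxSpos)
  -- conclude
  rw [hGC, hGI]
  have hdenpos : 0 < D * St k₁ * M := mul_pos (mul_pos hDpos (hStpos k₁)) hMpos
  have hfrac : A / D - S k₁ k₁ * τ k₁ / St k₁ + δ / M
      = (M * (A * St k₁ - S k₁ k₁ * τ k₁ * D) + δ * D * St k₁) / (D * St k₁ * M) := by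
    field_simp [hDpos.ne', (hStpos k₁).ne', hMne]
  have hfinal : A / D - S k₁ k₁ * τ k₁ / St k₁ + δ / M ≤ 0 := by
    rw [hfrac]
    exact div_nonpos_of_nonpos_of_nonneg hNUM hdenpos.le
  have hRHS : -M⁻¹ * ((C.card : ℝ) - (I₁.card : ℝ)) / N = -(δ / M) := by
    rw [hδval]
    field_simp
  rw [hRHS]
  linarith only [hfinal]
end

section
/- (Lemma 1, Cases n ≤ n_1.) For every nonempty subset C ⊆ I_1, the population objective satisfies the exact identity G(C) = (|C|/N) · S_{11}/S̃_{1·}. In particular G(I_1) = τ_1 · S_{11}/S̃_{1·}, and for every nonempty C ⊊ I_1, G(C) − G(I_1) = −( (n_1 − |C|)/N ) · S_{11}/S̃_{1·}. -/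
open BigOperators

theorem stmt_6 (N K : ℕ) (hN : 1 ≤ N) (hK : 2 ≤ K)
    (g : Fin N → Fin K)
    (k₁ : Fin K) (hk₁ : (k₁ : ℕ) = 0)
    (S : Matrix (Fin K) (Fin K) ℝ) (hSsymm : S.IsSymm) (hSpos : ∀ i j, 0 < S i j)
    (τ : Fin K → ℝ)
    (hτ : ∀ k, τ k = ((Finset.univ.filter fun u => g u = k).card : ℝ) / N)
    (St : Fin K → ℝ) (hSt : ∀ i, St i = ∑ j, S i j * τ j)
    (I₁ : Finset (Fin N)) (hI₁ : I₁ = Finset.univ.filter fun u => g u = k₁)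
    (hI₁ne : I₁.Nonempty)
    (R : Finset (Fin N) → Fin 2 → Fin K → ℝ)
    (hR0 : ∀ C b, R C 0 b = ((C.filter fun u => g u = b).card : ℝ) / N)
    (hR1 : ∀ C b, R C 1 b = (((Cᶜ).filter fun u => g u = b).card : ℝ) / N)
    (G : Finset (Fin N) → ℝ)
    (hG : ∀ C, G C = (∑ i, ∑ j, R C 0 i * S i j * R C 0 j) /
        ((∑ i, ∑ j, R C 0 i * S i j * R C 0 j) + ∑ i, ∑ j, R C 0 i * S i j * R C 1 j)) :
    (∀ C : Finset (Fin N), C.Nonempty → C ⊆ I₁ →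
        G C = ((C.card : ℝ) / N) * (S k₁ k₁ / St k₁)) ∧
    G I₁ = τ k₁ * (S k₁ k₁ / St k₁) ∧
    (∀ C : Finset (Fin N), C.Nonempty → C ⊂ I₁ →
        G C - G I₁ = -(((I₁.card : ℝ) - (C.card : ℝ)) / N) * (S k₁ k₁ / St k₁)) := by
  have hNpos : (0:ℝ) < N := by exact_mod_cast hN
  have hτnonneg : ∀ k, 0 ≤ τ k := by
    intro k; rw [hτ]; positivity
  have hτ1pos : 0 < τ k₁ := by
    rw [hτ]
    have h1 : 0 < ((Finset.univ.filter fun u => g u = k₁).card : ℝ) := by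
      rw [← hI₁]; exact_mod_cast Finset.card_pos.mpr hI₁ne
    positivity
  have hStpos : 0 < St k₁ := by
    rw [hSt]
    have hterm : ∀ j ∈ Finset.univ, 0 ≤ S k₁ j * τ j :=
      fun j _ => mul_nonneg (hSpos k₁ j).le (hτnonneg j)
    calc (0:ℝ) < S k₁ k₁ * τ k₁ := mul_pos (hSpos k₁ k₁) hτ1pos
      _ ≤ _ := Finset.single_le_sum hterm (Finset.mem_univ k₁)
  have key : ∀ C : Finset (Fin N), C.Nonempty → C ⊆ I₁ →
      G C = ((C.card : ℝ) / N) * (S k₁ k₁ / St k₁) := by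
    intro C hCne hCsub
    set c : ℝ := (C.card : ℝ) / N with hc
    have hcpos : 0 < c := div_pos (by exact_mod_cast Finset.card_pos.mpr hCne) hNpos
    have hgC : ∀ u ∈ C, g u = k₁ := by
      intro u hu
      have := hCsub hu
      rw [hI₁, Finset.mem_filter] at this
      exact this.2
    have hR0C : ∀ b, R C 0 b = if b = k₁ then c else 0 := by
      intro b
      rw [hR0]
      by_cases hb : b = k₁
      · subst hb
        rw [if_pos rfl, Finset.filter_true_of_mem hgC]
      · rw [if_neg hb]
        have hemp : C.filter (fun u => g u = b) = ∅ := by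
          apply Finset.filter_false_of_mem
          intro u hu h
          exact hb ((h.symm.trans (hgC u hu)).symm ▸ rfl)
        rw [hemp]; simp
    have hsplit : ∀ b, R C 0 b + R C 1 b = τ b := by
      intro b
      rw [hR0, hR1, hτ, ← add_div]
      congr 1
      have hdis : Disjoint (C.filter fun u => g u = b) ((Cᶜ).filter fun u => g u = b) :=
        Finset.disjoint_filter_filter disjoint_compl_right
      rw [← Nat.cast_add, ← Finset.card_union_of_disjoint hdis, ← Finset.filter_union,
        Finset.union_compl]
    have hnum : (∑ i, ∑ j, R C 0 i * S i j * R C 0 j) = c * S k₁ k₁ * c := by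
      simp [hR0C, ite_mul, mul_ite, zero_mul, mul_zero, Finset.sum_ite_eq']
    have hcross : (∑ i, ∑ j, R C 0 i * S i j * R C 1 j) = ∑ j, c * S k₁ j * R C 1 j := by
      simp [hR0C, ite_mul, zero_mul, Finset.sum_ite_eq']
    have hden : (∑ i, ∑ j, R C 0 i * S i j * R C 0 j) + (∑ i, ∑ j, R C 0 i * S i j * R C 1 j)
        = c * St k₁ := by
      rw [hnum, hcross, hSt]
      have hn2 : c * S k₁ k₁ * c = ∑ j, c * S k₁ j * R C 0 j := by
        simp [hR0C, mul_ite, mul_zero, Finset.sum_ite_eq']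
      rw [hn2, ← Finset.sum_add_distrib, Finset.mul_sum]
      apply Finset.sum_congr rfl
      intro j _
      rw [mul_assoc, mul_assoc, ← mul_add, ← mul_add, hsplit j]
    rw [hG, hden, hnum]
    field_simp
  have hτ1card : τ k₁ = ((I₁.card : ℝ) / N) := by
    rw [hτ, hI₁]
  refine ⟨key, ?_, ?_⟩
  · rw [key I₁ hI₁ne (le_refl _), hτ1card]
  · intro C hCne hCss
    rw [key C hCne hCss.subset, key I₁ hI₁ne (le_refl _)]
    ring
end

section
/- (Lemma 2, explicit form.) Assume c := S_{11}·min_{2≤i≤K} S̃_{i·} − 2·max_{2≤j≤K} S_{1j}·S̃_{1·} > 0. Set ε := c·τ_1 / (2·U_θ·S̃_{1·}·max_{2≤i,j≤K} S_{ij}) and c' := L_θ · min{ S_{11}/S̃_{1·}, 1/( 2·S̃_{1·}²/c + K·min_{2≤i≤K} S̃_{i·} / max_{2≤i,j≤K} S_{ij} ) }. Then for every nonempty subset C ⊆ {1,…,N} such that (C ⊆ I_1 or I_1 ⊆ C) and |C| ≤ n_1 + ε·N, one has G̃(C) − G̃(I_1) ≤ −c' · | |C| − n_1 | / N. -/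
set_option maxHeartbeats 1000000


open BigOperators

theorem stmt_7 (N K : ℕ) (hN : 1 ≤ N) (hK : 2 ≤ K)
    (g : Fin N → Fin K)
    (k₁ : Fin K) (hk₁ : (k₁ : ℕ) = 0)
    (S : Matrix (Fin K) (Fin K) ℝ) (hSsymm : S.IsSymm) (hSpos : ∀ i j, 0 < S i j)
    (τ : Fin K → ℝ)
    (hτ : ∀ k, τ k = ((Finset.univ.filter fun u => g u = k).card : ℝ) / N)
    (St : Fin K → ℝ) (hSt : ∀ i, St i = ∑ j, S i j * τ j)
    (I₁ : Finset (Fin N)) (hI₁ : I₁ = Finset.univ.filter fun u => g u = k₁)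
    (hI₁ne : I₁.Nonempty)
    (θ : Fin N → ℝ) (Lθ Uθ : ℝ) (hLθ : 0 < Lθ)
    (hθ : ∀ u, Lθ ≤ θ u ∧ θ u ≤ Uθ)
    (hident : ∀ k : Fin K, ∑ u ∈ Finset.univ.filter (fun u => g u = k), θ u
        = ((Finset.univ.filter fun u => g u = k).card : ℝ))
    (Rt : Finset (Fin N) → Fin 2 → Fin K → ℝ)
    (hRt0 : ∀ C b, Rt C 0 b = (∑ u ∈ C.filter fun u => g u = b, θ u) / N)
    (hRt1 : ∀ C b, Rt C 1 b = (∑ u ∈ (Cᶜ).filter fun u => g u = b, θ u) / N)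
    (Gt : Finset (Fin N) → ℝ)
    (hGt : ∀ C, Gt C = (∑ i, ∑ j, Rt C 0 i * S i j * Rt C 0 j) /
        ((∑ i, ∑ j, Rt C 0 i * S i j * Rt C 0 j) + ∑ i, ∑ j, Rt C 0 i * S i j * Rt C 1 j))
    (minSt : ℝ) (hminSt : ∀ i : Fin K, i ≠ k₁ → minSt ≤ St i)
    (hminSt' : ∃ i : Fin K, i ≠ k₁ ∧ minSt = St i)
    (maxS1 : ℝ) (hmaxS1 : ∀ j : Fin K, j ≠ k₁ → S k₁ j ≤ maxS1)
    (hmaxS1' : ∃ j : Fin K, j ≠ k₁ ∧ maxS1 = S k₁ j)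
    (maxS : ℝ) (hmaxS : ∀ i j : Fin K, i ≠ k₁ → j ≠ k₁ → S i j ≤ maxS)
    (hmaxS' : ∃ i j : Fin K, i ≠ k₁ ∧ j ≠ k₁ ∧ maxS = S i j)
    (c : ℝ) (hc : c = S k₁ k₁ * minSt - 2 * maxS1 * St k₁) (hcpos : 0 < c)
    (ε : ℝ) (hε : ε = c * τ k₁ / (2 * Uθ * St k₁ * maxS))
    (c' : ℝ)
    (hc' : c' = Lθ * min (S k₁ k₁ / St k₁)
        (1 / (2 * St k₁ ^ 2 / c + K * minSt / maxS))) :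
    ∀ C : Finset (Fin N), C.Nonempty → (C ⊆ I₁ ∨ I₁ ⊆ C) →
      (C.card : ℝ) ≤ (I₁.card : ℝ) + ε * N →
      Gt C - Gt I₁ ≤ -c' * |(C.card : ℝ) - (I₁.card : ℝ)| / N := by
  intro C hCne hsub hcard
  have hN0 : (0:ℝ) < N := by exact_mod_cast hN
  have hθpos : ∀ u, 0 < θ u := fun u => lt_of_lt_of_le hLθ (hθ u).1
  have hLU : Lθ ≤ Uθ := by
    obtain ⟨v, _⟩ := hI₁ne
    exact (hθ v).1.trans (hθ v).2
  have hUpos : 0 < Uθ := hLθ.trans_le hLU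
  have hτnn : ∀ k, 0 ≤ τ k := fun k => by rw [hτ]; positivity
  have hIcard : (∑ u ∈ I₁, θ u) = (I₁.card : ℝ) := by rw [hI₁]; exact hident k₁
  have hτ1 : τ k₁ = (I₁.card : ℝ) / N := by rw [hτ, hI₁]
  have hτ1pos : 0 < τ k₁ := by
    rw [hτ1]
    have h1 : 0 < I₁.card := Finset.card_pos.mpr hI₁ne
    have h1' : (0:ℝ) < I₁.card := by exact_mod_cast h1
    exact div_pos h1' hN0
  have hStpos : ∀ i, 0 < St i := by
    intro i
    rw [hSt]
    have h1 : S i k₁ * τ k₁ ≤ ∑ j, S i j * τ j :=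
      Finset.single_le_sum (f := fun j => S i j * τ j)
        (fun j _ => mul_nonneg (hSpos i j).le (hτnn j)) (Finset.mem_univ k₁)
    linarith only [h1, mul_pos (hSpos i k₁) hτ1pos]
  have hSt1 : 0 < St k₁ := hStpos k₁
  have hminStpos : 0 < minSt := by obtain ⟨i, _, he⟩ := hminSt'; rw [he]; exact hStpos i
  have hmaxSpos : 0 < maxS := by obtain ⟨i, j, _, _, he⟩ := hmaxS'; rw [he]; exact hSpos i j
  have hmaxS1pos : 0 < maxS1 := by obtain ⟨j, _, he⟩ := hmaxS1'; rw [he]; exact hSpos k₁ j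
  have hcle : c ≤ S k₁ k₁ * minSt := by
    rw [hc]; linarith only [mul_pos hmaxS1pos hSt1]
  have hKR : (1:ℝ) ≤ (K:ℝ) := by
    have : 1 ≤ K := le_trans one_le_two hK
    exact_mod_cast this
  have hDmpos : 0 < 2 * St k₁ ^ 2 / c + (K:ℝ) * minSt / maxS := by
    have h1 : 0 < 2 * St k₁ ^ 2 / c := div_pos (by positivity) hcpos
    have h2 : 0 < (K:ℝ) * minSt / maxS :=
      div_pos (mul_pos (lt_of_lt_of_le one_pos hKR) hminStpos) hmaxSpos
    linarith only [h1, h2]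
  have hc'nn : 0 ≤ c' := by
    rw [hc']
    have h1 : 0 ≤ S k₁ k₁ / St k₁ := le_of_lt (div_pos (hSpos k₁ k₁) hSt1)
    have h2 : 0 ≤ 1 / (2 * St k₁ ^ 2 / c + (K:ℝ) * minSt / maxS) :=
      le_of_lt (one_div_pos.mpr hDmpos)
    exact mul_nonneg hLθ.le (le_min h1 h2)
  have hxy : ∀ (D : Finset (Fin N)) (b : Fin K), Rt D 0 b + Rt D 1 b = τ b := by
    intro D b
    have hdisj : Disjoint (D.filter fun u => g u = b) ((Dᶜ).filter fun u => g u = b) :=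
      Finset.disjoint_filter_filter disjoint_compl_right
    have hun : (D.filter fun u => g u = b) ∪ ((Dᶜ).filter fun u => g u = b)
        = Finset.univ.filter fun u => g u = b := by
      rw [← Finset.filter_union]
      congr 1
      simp
    rw [hRt0, hRt1, ← add_div, ← Finset.sum_union hdisj, hun, hident, hτ]
  have hxnn : ∀ (D : Finset (Fin N)) (b : Fin K), 0 ≤ Rt D 0 b := by
    intro D b
    rw [hRt0]
    have h1 : 0 ≤ ∑ u ∈ D.filter fun u => g u = b, θ u :=
      Finset.sum_nonneg fun u _ => (hθpos u).le
    positivity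
  -- the value of Gt on subsets of I₁
  have hG1 : ∀ D : Finset (Fin N), D.Nonempty → D ⊆ I₁ →
      Gt D = (∑ u ∈ D, θ u) / N * S k₁ k₁ / St k₁ := by
    intro D hDne hDsub
    have hgD : ∀ u ∈ D, g u = k₁ := by
      intro u hu
      have h := hDsub hu
      rw [hI₁, Finset.mem_filter] at h
      exact h.2
    have hx1 : Rt D 0 k₁ = (∑ u ∈ D, θ u) / N := by
      rw [hRt0, Finset.filter_true_of_mem fun u hu => hgD u hu]
    have hx0 : ∀ b, b ≠ k₁ → Rt D 0 b = 0 := by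
      intro b hb
      rw [hRt0, Finset.filter_false_of_mem, Finset.sum_empty, zero_div]
      intro u hu h
      exact hb (by rw [← h, hgD u hu])
    have hspos : 0 < (∑ u ∈ D, θ u) / N :=
      div_pos (Finset.sum_pos (fun u _ => hθpos u) hDne) hN0
    have hA : ∑ i, ∑ j, Rt D 0 i * S i j * Rt D 0 j
        = Rt D 0 k₁ * S k₁ k₁ * Rt D 0 k₁ := by
      rw [Finset.sum_eq_single k₁]
      · rw [Finset.sum_eq_single k₁]
        · intro b _ hb; rw [hx0 b hb]; ring
        · intro h; exact absurd (Finset.mem_univ _) h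
      · intro b _ hb
        exact Finset.sum_eq_zero fun j _ => by rw [hx0 b hb]; ring
      · intro h; exact absurd (Finset.mem_univ _) h
    have hy : ∀ j, Rt D 1 j = τ j - Rt D 0 j := fun j => by linarith only [hxy D j]
    have hB : ∑ i, ∑ j, Rt D 0 i * S i j * Rt D 1 j
        = Rt D 0 k₁ * (St k₁ - S k₁ k₁ * Rt D 0 k₁) := by
      rw [Finset.sum_eq_single k₁]
      · have h2 : ∑ j, S k₁ j * Rt D 0 j = S k₁ k₁ * Rt D 0 k₁ := by
          rw [Finset.sum_eq_single k₁]
          · intro b _ hb; rw [hx0 b hb]; ring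
          · intro h; exact absurd (Finset.mem_univ _) h
        have h3 : ∀ j : Fin K, Rt D 0 k₁ * S k₁ j * Rt D 1 j
            = Rt D 0 k₁ * (S k₁ j * τ j) - Rt D 0 k₁ * (S k₁ j * Rt D 0 j) := by
          intro j; rw [hy j]; ring
        rw [Finset.sum_congr rfl fun j _ => h3 j, Finset.sum_sub_distrib,
          ← Finset.mul_sum, ← Finset.mul_sum, ← hSt, h2]
        ring
      · intro b _ hb
        exact Finset.sum_eq_zero fun j _ => by rw [hx0 b hb]; ring
      · intro h; exact absurd (Finset.mem_univ _) h
    rw [hGt, hA, hB, hx1]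
    have hden : (∑ u ∈ D, θ u) / N * S k₁ k₁ * ((∑ u ∈ D, θ u) / N)
        + (∑ u ∈ D, θ u) / N * (St k₁ - S k₁ k₁ * ((∑ u ∈ D, θ u) / N))
        = (∑ u ∈ D, θ u) / N * St k₁ := by ring
    rw [hden]
    have hsum_ne : (∑ u ∈ D, θ u) ≠ 0 := (Finset.sum_pos (fun u _ => hθpos u) hDne).ne'
    field_simp
  have hGI : Gt I₁ = τ k₁ * S k₁ k₁ / St k₁ := by
    rw [hG1 I₁ hI₁ne (subset_refl I₁), hIcard, ← hτ1]
  rcases hsub with hCI | hIC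
  · -- Case C ⊆ I₁
    have hGC := hG1 C hCne hCI
    have hCle : (C.card : ℝ) ≤ (I₁.card : ℝ) := by
      exact_mod_cast Finset.card_le_card hCI
    have habs : |(C.card:ℝ) - (I₁.card:ℝ)| = (I₁.card:ℝ) - C.card := by
      rw [abs_of_nonpos (by linarith only [hCle])]; ring
    have hsdiff : ∑ u ∈ I₁, θ u - ∑ u ∈ C, θ u = ∑ u ∈ I₁ \ C, θ u := by
      rw [← Finset.sum_sdiff hCI]; ring
    have hcard' : ((I₁ \ C).card : ℝ) = (I₁.card:ℝ) - C.card := by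
      rw [Finset.card_sdiff_of_subset hCI, Nat.cast_sub (Finset.card_le_card hCI)]
    have hlb : Lθ * ((I₁.card:ℝ) - C.card) ≤ ∑ u ∈ I₁, θ u - ∑ u ∈ C, θ u := by
      rw [hsdiff]
      have h := Finset.card_nsmul_le_sum (I₁ \ C) θ Lθ (fun v _ => (hθ v).1)
      rw [nsmul_eq_mul] at h
      rw [← hcard']
      linarith only [h]
    have hc'le : c' ≤ Lθ * (S k₁ k₁ / St k₁) := by
      rw [hc']
      exact mul_le_mul_of_nonneg_left (min_le_left _ _) hLθ.le
    have key : c' * ((I₁.card:ℝ) - C.card)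
        ≤ (∑ u ∈ I₁, θ u - ∑ u ∈ C, θ u) * (S k₁ k₁ / St k₁) := by
      have h1 : c' * ((I₁.card:ℝ) - C.card)
          ≤ (Lθ * (S k₁ k₁ / St k₁)) * ((I₁.card:ℝ) - C.card) :=
        mul_le_mul_of_nonneg_right hc'le (by linarith only [hCle])
      have h2 : (Lθ * ((I₁.card:ℝ) - C.card)) * (S k₁ k₁ / St k₁)
          ≤ (∑ u ∈ I₁, θ u - ∑ u ∈ C, θ u) * (S k₁ k₁ / St k₁) :=
        mul_le_mul_of_nonneg_right hlb (le_of_lt (div_pos (hSpos k₁ k₁) hSt1))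
      linarith only [h1, h2]
    have key2 : c' * ((I₁.card:ℝ) - C.card) / N
        ≤ (∑ u ∈ I₁, θ u - ∑ u ∈ C, θ u) * (S k₁ k₁ / St k₁) / N :=
      (div_le_div_iff_of_pos_right hN0).mpr key
    rw [hIcard] at key2
    rw [hGC, hGI, hτ1, habs]
    ring_nf at key2 ⊢
    linarith only [key2]
  · -- Case I₁ ⊆ C
    by_cases hEq : C = I₁
    · subst hEq
      simp
    · have hss : I₁ ⊂ C := Finset.ssubset_iff_subset_ne.mpr ⟨hIC, fun h => hEq h.symm⟩
      have hlt : I₁.card < C.card := Finset.card_lt_card hss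
      have hIlt : (I₁.card:ℝ) < (C.card:ℝ) := by exact_mod_cast hlt
      obtain ⟨t, htdef⟩ : ∃ x : ℝ, x = ∑ b ∈ Finset.univ.erase k₁, Rt C 0 b := ⟨_, rfl⟩
      obtain ⟨u, hudef⟩ : ∃ x : ℝ, x = ∑ b ∈ Finset.univ.erase k₁, Rt C 0 b * St b := ⟨_, rfl⟩
      obtain ⟨Q2, hQ2def⟩ : ∃ x : ℝ, x = ∑ b ∈ Finset.univ.erase k₁, S k₁ b * Rt C 0 b := ⟨_, rfl⟩
      obtain ⟨Q3, hQ3def⟩ : ∃ x : ℝ,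
          x = ∑ b ∈ Finset.univ.erase k₁, ∑ b' ∈ Finset.univ.erase k₁,
            Rt C 0 b * S b b' * Rt C 0 b' := ⟨_, rfl⟩
      obtain ⟨r, hrdef⟩ : ∃ x : ℝ, x = ((C.card:ℝ) - (I₁.card:ℝ)) / N := ⟨_, rfl⟩
      have hrpos : 0 < r := by rw [hrdef]; exact div_pos (by linarith only [hIlt]) hN0
      have hrε : r ≤ ε := by
        rw [hrdef, div_le_iff₀ hN0]
        linarith only [hcard]
      have hfilter : C.filter (fun v => g v = k₁) = I₁ := by
        ext v
        simp only [Finset.mem_filter]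
        constructor
        · rintro ⟨_, hgv⟩
          rw [hI₁, Finset.mem_filter]
          exact ⟨Finset.mem_univ v, hgv⟩
        · intro hvI
          have h2 := hvI
          rw [hI₁, Finset.mem_filter] at h2
          exact ⟨hIC hvI, h2.2⟩
      have hxk : Rt C 0 k₁ = τ k₁ := by
        rw [hRt0, hfilter, hIcard, hτ1]
      have hyk : Rt C 1 k₁ = 0 := by
        rw [hRt1, Finset.filter_false_of_mem, Finset.sum_empty, zero_div]
        intro v hv hgv
        have hvI : v ∈ I₁ := by
          rw [hI₁, Finset.mem_filter]; exact ⟨Finset.mem_univ v, hgv⟩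
        exact (Finset.mem_compl.mp hv) (hIC hvI)
      -- splitting sums at k₁
      have a1 : (∑ i, ∑ j, Rt C 0 i * S i j * Rt C 0 j)
          = (∑ j, Rt C 0 k₁ * S k₁ j * Rt C 0 j)
            + ∑ b ∈ Finset.univ.erase k₁, ∑ j, Rt C 0 b * S b j * Rt C 0 j :=
        (Finset.add_sum_erase _ (fun i => ∑ j, Rt C 0 i * S i j * Rt C 0 j)
          (Finset.mem_univ k₁)).symm
      have a2 : (∑ j, Rt C 0 k₁ * S k₁ j * Rt C 0 j)
          = Rt C 0 k₁ * S k₁ k₁ * Rt C 0 k₁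
            + ∑ b ∈ Finset.univ.erase k₁, Rt C 0 k₁ * S k₁ b * Rt C 0 b :=
        (Finset.add_sum_erase _ (fun j => Rt C 0 k₁ * S k₁ j * Rt C 0 j)
          (Finset.mem_univ k₁)).symm
      have a3 : ∀ b : Fin K, (∑ j, Rt C 0 b * S b j * Rt C 0 j)
          = Rt C 0 b * S b k₁ * Rt C 0 k₁
            + ∑ b' ∈ Finset.univ.erase k₁, Rt C 0 b * S b b' * Rt C 0 b' :=
        fun b => (Finset.add_sum_erase _ (fun j => Rt C 0 b * S b j * Rt C 0 j)
          (Finset.mem_univ k₁)).symm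
      have e1 : ∑ b ∈ Finset.univ.erase k₁, Rt C 0 k₁ * S k₁ b * Rt C 0 b = τ k₁ * Q2 := by
        rw [hQ2def, Finset.mul_sum]
        exact Finset.sum_congr rfl fun b _ => by rw [hxk]; ring
      have e2 : ∑ b ∈ Finset.univ.erase k₁, Rt C 0 b * S b k₁ * Rt C 0 k₁ = τ k₁ * Q2 := by
        rw [hQ2def, Finset.mul_sum]
        refine Finset.sum_congr rfl fun b _ => ?_
        rw [hxk, hSsymm.apply k₁ b]
        ring
      have hA : ∑ i, ∑ j, Rt C 0 i * S i j * Rt C 0 j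
          = τ k₁ * S k₁ k₁ * τ k₁ + 2 * (τ k₁ * Q2) + Q3 := by
        rw [a1, a2, Finset.sum_congr rfl fun b _ => a3 b, Finset.sum_add_distrib, e1, e2,
          hxk, hQ3def]
        ring
      have hAB : (∑ i, ∑ j, Rt C 0 i * S i j * Rt C 0 j)
          + (∑ i, ∑ j, Rt C 0 i * S i j * Rt C 1 j) = τ k₁ * St k₁ + u := by
        rw [← Finset.sum_add_distrib]
        have e : ∀ i : Fin K, ((∑ j, Rt C 0 i * S i j * Rt C 0 j)
            + ∑ j, Rt C 0 i * S i j * Rt C 1 j) = Rt C 0 i * St i := by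
          intro i
          rw [← Finset.sum_add_distrib, hSt, Finset.mul_sum]
          refine Finset.sum_congr rfl fun j _ => ?_
          have h := hxy C j
          rw [show τ j = Rt C 0 j + Rt C 1 j from h.symm]
          ring
        rw [Finset.sum_congr rfl fun i _ => e i]
        rw [show (∑ i, Rt C 0 i * St i) = Rt C 0 k₁ * St k₁
            + ∑ b ∈ Finset.univ.erase k₁, Rt C 0 b * St b from
          (Finset.add_sum_erase _ (fun i => Rt C 0 i * St i) (Finset.mem_univ k₁)).symm]
        rw [hxk, hudef]
      have hGtC : Gt C = (τ k₁ * S k₁ k₁ * τ k₁ + 2 * (τ k₁ * Q2) + Q3) / (τ k₁ * St k₁ + u) := by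
        rw [hGt C, hAB, hA]
      -- bounds on t
      have hfib : ∑ b ∈ Finset.univ.erase k₁, ∑ v ∈ C.filter (fun v => g v = b), θ v
          = ∑ v ∈ C \ I₁, θ v := by
        have h1 : (∑ v ∈ C.filter (fun v => g v = k₁), θ v)
            + ∑ b ∈ Finset.univ.erase k₁, ∑ v ∈ C.filter (fun v => g v = b), θ v
            = ∑ v ∈ C, θ v := by
          rw [show ((∑ v ∈ C.filter (fun v => g v = k₁), θ v)
              + ∑ b ∈ Finset.univ.erase k₁, ∑ v ∈ C.filter (fun v => g v = b), θ v)
              = ∑ b, ∑ v ∈ C.filter (fun v => g v = b), θ v from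
            Finset.add_sum_erase _ (fun b => ∑ v ∈ C.filter (fun v => g v = b), θ v)
              (Finset.mem_univ k₁)]
          exact Finset.sum_fiberwise _ _ _
        have h2 : ∑ v ∈ C \ I₁, θ v + ∑ v ∈ I₁, θ v = ∑ v ∈ C, θ v :=
          Finset.sum_sdiff hIC
        rw [hfilter] at h1
        linarith only [h1, h2]
      have ht' : t = (∑ v ∈ C \ I₁, θ v) / N := by
        rw [htdef, ← hfib, Finset.sum_div]
        exact Finset.sum_congr rfl fun b _ => hRt0 C b
      have hcardCI : ((C \ I₁).card : ℝ) = (C.card:ℝ) - (I₁.card:ℝ) := by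
        rw [Finset.card_sdiff_of_subset hIC, Nat.cast_sub (Finset.card_le_card hIC)]
      have ht_lb : Lθ * r ≤ t := by
        rw [ht', hrdef]
        have h := Finset.card_nsmul_le_sum (C \ I₁) θ Lθ (fun v _ => (hθ v).1)
        rw [nsmul_eq_mul, hcardCI] at h
        rw [show Lθ * (((C.card:ℝ) - (I₁.card:ℝ)) / N) = Lθ * ((C.card:ℝ) - (I₁.card:ℝ)) / N
          from by ring]
        exact (div_le_div_iff_of_pos_right hN0).mpr (by linarith only [h])
      have ht_ub : t ≤ Uθ * r := by
        rw [ht', hrdef]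
        have h := Finset.sum_le_card_nsmul (C \ I₁) θ Uθ (fun v _ => (hθ v).2)
        rw [nsmul_eq_mul, hcardCI] at h
        rw [show Uθ * (((C.card:ℝ) - (I₁.card:ℝ)) / N) = Uθ * ((C.card:ℝ) - (I₁.card:ℝ)) / N
          from by ring]
        exact (div_le_div_iff_of_pos_right hN0).mpr (by linarith only [h])
      have ht0 : 0 < t := lt_of_lt_of_le (mul_pos hLθ hrpos) ht_lb
      have htT : t ≤ Uθ * ε :=
        ht_ub.trans (mul_le_mul_of_nonneg_left hrε hUpos.le)
      have hu_lb : minSt * t ≤ u := by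
        rw [htdef, hudef, Finset.mul_sum]
        refine Finset.sum_le_sum fun b hb => ?_
        have hbne : b ≠ k₁ := (Finset.mem_erase.mp hb).1
        have h1 := hminSt b hbne
        exact le_trans (mul_le_mul_of_nonneg_right h1 (hxnn C b)) (le_of_eq (mul_comm _ _))
      have hu0 : 0 ≤ u := by
        rw [hudef]
        exact Finset.sum_nonneg fun b _ => mul_nonneg (hxnn C b) (hStpos b).le
      have hv : 0 ≤ u - minSt * t := by linarith only [hu_lb]
      have hQ2le : Q2 ≤ maxS1 * t := by
        rw [hQ2def, htdef, Finset.mul_sum]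
        refine Finset.sum_le_sum fun b hb => ?_
        exact mul_le_mul_of_nonneg_right (hmaxS1 b (Finset.mem_erase.mp hb).1) (hxnn C b)
      have hQ3le : Q3 ≤ maxS * (t * t) := by
        rw [hQ3def, htdef]
        calc ∑ b ∈ Finset.univ.erase k₁, ∑ b' ∈ Finset.univ.erase k₁,
              Rt C 0 b * S b b' * Rt C 0 b'
            ≤ ∑ b ∈ Finset.univ.erase k₁, ∑ b' ∈ Finset.univ.erase k₁,
              maxS * (Rt C 0 b * Rt C 0 b') := by
              refine Finset.sum_le_sum fun b hb => Finset.sum_le_sum fun b' hb' => ?_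
              have h1 := hmaxS b b' (Finset.mem_erase.mp hb).1 (Finset.mem_erase.mp hb').1
              calc Rt C 0 b * S b b' * Rt C 0 b'
                  = S b b' * (Rt C 0 b * Rt C 0 b') := by ring
                _ ≤ maxS * (Rt C 0 b * Rt C 0 b') :=
                    mul_le_mul_of_nonneg_right h1 (mul_nonneg (hxnn C b) (hxnn C b'))
          _ = maxS * ((∑ b ∈ Finset.univ.erase k₁, Rt C 0 b)
                * ∑ b ∈ Finset.univ.erase k₁, Rt C 0 b) := by
              rw [Finset.sum_mul_sum, Finset.mul_sum]
              exact Finset.sum_congr rfl fun b _ => by rw [Finset.mul_sum]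
      -- scalar inequalities
      have hK1 : maxS * St k₁ * t ≤ c * τ k₁ / 2 := by
        have h1 : maxS * St k₁ * t ≤ maxS * St k₁ * (Uθ * ε) :=
          mul_le_mul_of_nonneg_left htT (by positivity)
        have h2 : maxS * St k₁ * (Uθ * ε) = c * τ k₁ / 2 := by
          rw [hε]
          field_simp
        linarith only [h1, h2]
      have hXle : 2 * St k₁ ^ 2 / c + minSt / maxS
          ≤ 2 * St k₁ ^ 2 / c + (K:ℝ) * minSt / maxS := by
        have h1 : minSt / maxS ≤ (K:ℝ) * minSt / maxS :=
          (div_le_div_iff_of_pos_right hmaxSpos).mpr (le_mul_of_one_le_left hminStpos.le hKR)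
        linarith only [h1]
      have hc'le2 : c' ≤ Lθ / (2 * St k₁ ^ 2 / c + (K:ℝ) * minSt / maxS) := by
        rw [hc']
        calc Lθ * min (S k₁ k₁ / St k₁) (1 / (2 * St k₁ ^ 2 / c + (K:ℝ) * minSt / maxS))
            ≤ Lθ * (1 / (2 * St k₁ ^ 2 / c + (K:ℝ) * minSt / maxS)) :=
              mul_le_mul_of_nonneg_left (min_le_right _ _) hLθ.le
          _ = Lθ / (2 * St k₁ ^ 2 / c + (K:ℝ) * minSt / maxS) := by rw [mul_one_div]
      have hc'Dm : c' * (2 * St k₁ ^ 2 / c + (K:ℝ) * minSt / maxS) ≤ Lθ :=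
        (le_div_iff₀ hDmpos).mp hc'le2
      have hc'X : c' * (2 * St k₁ ^ 2 / c + minSt / maxS) ≤ Lθ :=
        le_trans (mul_le_mul_of_nonneg_left hXle hc'nn) hc'Dm
      have hXD : St k₁ * (τ k₁ * St k₁ + minSt * (Uθ * ε))
          = (τ k₁ * c / 2) * (2 * St k₁ ^ 2 / c + minSt / maxS) := by
        rw [hε]
        field_simp
      have hτc2 : (0:ℝ) ≤ τ k₁ * c / 2 :=
        div_nonneg (mul_nonneg hτ1pos.le hcpos.le) (by norm_num)
      have hK2a : c' * (St k₁ * (τ k₁ * St k₁ + minSt * (Uθ * ε))) ≤ Lθ * (τ k₁ * c / 2) := by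
        rw [hXD]
        calc c' * ((τ k₁ * c / 2) * (2 * St k₁ ^ 2 / c + minSt / maxS))
            = (τ k₁ * c / 2) * (c' * (2 * St k₁ ^ 2 / c + minSt / maxS)) := by ring
          _ ≤ (τ k₁ * c / 2) * Lθ := mul_le_mul_of_nonneg_left hc'X hτc2
          _ = Lθ * (τ k₁ * c / 2) := by ring
      have hcr : 0 ≤ c' * r * St k₁ := mul_nonneg (mul_nonneg hc'nn hrpos.le) hSt1.le
      have hK2 : c' * r * St k₁ * (τ k₁ * St k₁ + minSt * t) ≤ t * (τ k₁ * c / 2) := by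
        have s1 : c' * r * St k₁ * (τ k₁ * St k₁ + minSt * t)
            ≤ c' * r * St k₁ * (τ k₁ * St k₁ + minSt * (Uθ * ε)) := by
          apply mul_le_mul_of_nonneg_left _ hcr
          have := mul_le_mul_of_nonneg_left htT hminStpos.le
          linarith only [this]
        have s3 : r * (c' * (St k₁ * (τ k₁ * St k₁ + minSt * (Uθ * ε))))
            ≤ r * (Lθ * (τ k₁ * c / 2)) := mul_le_mul_of_nonneg_left hK2a hrpos.le
        have s5 : (Lθ * r) * (τ k₁ * c / 2) ≤ t * (τ k₁ * c / 2) :=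
          mul_le_mul_of_nonneg_right ht_lb hτc2
        ring_nf at s1 s3 s5 ⊢
        linarith only [s1, s3, s5]
      have hK3 : c' * r * St k₁ ≤ τ k₁ * S k₁ k₁ := by
        have p1 : c' * r * St k₁ * (minSt * t)
            ≤ c' * r * St k₁ * (τ k₁ * St k₁ + minSt * t) := by
          apply mul_le_mul_of_nonneg_left _ hcr
          linarith only [mul_pos hτ1pos hSt1]
        have p2 : t * (τ k₁ * c / 2) ≤ t * (τ k₁ * (S k₁ k₁ * minSt) / 2) := by
          apply mul_le_mul_of_nonneg_left _ ht0.le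
          linarith only [mul_le_mul_of_nonneg_left hcle hτ1pos.le]
        have p4 : t * (τ k₁ * (S k₁ k₁ * minSt) / 2) ≤ (τ k₁ * S k₁ k₁) * (minSt * t) := by
          have hX := mul_nonneg (mul_nonneg (mul_nonneg hτ1pos.le (hSpos k₁ k₁).le)
            hminStpos.le) ht0.le
          ring_nf at hX ⊢
          linarith only [hX]
        have p5 : c' * r * St k₁ * (minSt * t) ≤ (τ k₁ * S k₁ k₁) * (minSt * t) := by
          linarith only [p1, hK2, p2, p4]
        exact le_of_mul_le_mul_right p5 (mul_pos hminStpos ht0)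
      -- final assembly
      have habs2 : |(C.card:ℝ) - (I₁.card:ℝ)| = (C.card:ℝ) - (I₁.card:ℝ) :=
        abs_of_nonneg (by linarith)
      have hDen : 0 < τ k₁ * St k₁ + u := by linarith only [mul_pos hτ1pos hSt1, hu0]
      have hrN : -c' * ((C.card:ℝ) - (I₁.card:ℝ)) / N = -(c' * r) := by
        rw [hrdef]; ring
      rw [hGtC, hGI, habs2, hrN]
      rw [div_sub_div _ _ (ne_of_gt hDen) (ne_of_gt hSt1),
        div_le_iff₀ (mul_pos hDen hSt1)]
      have w1 : 2 * (τ k₁ * Q2) * St k₁ ≤ 2 * (τ k₁ * (maxS1 * t)) * St k₁ := by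
        have hX := mul_le_mul_of_nonneg_right
          (mul_le_mul_of_nonneg_left hQ2le hτ1pos.le) hSt1.le
        ring_nf at hX ⊢
        linarith only [hX]
      have w2 : Q3 * St k₁ ≤ maxS * (t * t) * St k₁ :=
        mul_le_mul_of_nonneg_right hQ3le hSt1.le
      have w3 : maxS * (t * t) * St k₁ ≤ c * τ k₁ / 2 * t := by
        have hX := mul_le_mul_of_nonneg_right hK1 ht0.le
        ring_nf at hX ⊢
        linarith only [hX]
      have w5 : (u - minSt * t) * (c' * r * St k₁) ≤ (u - minSt * t) * (τ k₁ * S k₁ k₁) :=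
        mul_le_mul_of_nonneg_left hK3 hv
      have w6 : t * τ k₁ * c = t * τ k₁ * (S k₁ k₁ * minSt)
          - t * τ k₁ * (2 * maxS1 * St k₁) := by rw [hc]; ring
      ring_nf at w1 w2 w3 hK2 w5 w6 ⊢
      linarith only [w1, w2, w3, hK2, w5, w6]
end

section
/- (Lemma 2, Cases n ≤ n_1.) For every nonempty subset C ⊆ I_1, the degree-corrected population objective satisfies G̃(C) = R̃_{11}·S_{11}/S̃_{1·}, where R̃_{11} = (1/N)Σ_{u∈C} θ_u; moreover τ_1 − R̃_{11} ≥ (L_θ/N)·(n_1 − |C|), G̃(I_1) = τ_1·S_{11}/S̃_{1·}, and consequently G̃(C) − G̃(I_1) ≤ −(L_θ·S_{11}/S̃_{1·})·(n_1 − |C|)/N. -/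
open BigOperators

theorem stmt_8 (N K : ℕ) (hN : 1 ≤ N) (hK : 2 ≤ K)
    (g : Fin N → Fin K)
    (k₁ : Fin K) (hk₁ : (k₁ : ℕ) = 0)
    (S : Matrix (Fin K) (Fin K) ℝ) (hSsymm : S.IsSymm) (hSpos : ∀ i j, 0 < S i j)
    (τ : Fin K → ℝ)
    (hτ : ∀ k, τ k = ((Finset.univ.filter fun u => g u = k).card : ℝ) / N)
    (St : Fin K → ℝ) (hSt : ∀ i, St i = ∑ j, S i j * τ j)
    (I₁ : Finset (Fin N)) (hI₁ : I₁ = Finset.univ.filter fun u => g u = k₁)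
    (hI₁ne : I₁.Nonempty)
    (θ : Fin N → ℝ) (Lθ Uθ : ℝ) (hLθ : 0 < Lθ)
    (hθ : ∀ u, Lθ ≤ θ u ∧ θ u ≤ Uθ)
    (hident : ∀ k : Fin K, ∑ u ∈ Finset.univ.filter (fun u => g u = k), θ u
        = ((Finset.univ.filter fun u => g u = k).card : ℝ))
    (Rt : Finset (Fin N) → Fin 2 → Fin K → ℝ)
    (hRt0 : ∀ C b, Rt C 0 b = (∑ u ∈ C.filter fun u => g u = b, θ u) / N)
    (hRt1 : ∀ C b, Rt C 1 b = (∑ u ∈ (Cᶜ).filter fun u => g u = b, θ u) / N)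
    (Gt : Finset (Fin N) → ℝ)
    (hGt : ∀ C, Gt C = (∑ i, ∑ j, Rt C 0 i * S i j * Rt C 0 j) /
        ((∑ i, ∑ j, Rt C 0 i * S i j * Rt C 0 j)
          + ∑ i, ∑ j, Rt C 0 i * S i j * Rt C 1 j)) :
    (∀ C : Finset (Fin N), C.Nonempty → C ⊆ I₁ →
        Gt C = ((∑ u ∈ C, θ u) / N) * (S k₁ k₁ / St k₁) ∧
        Rt C 0 k₁ = (∑ u ∈ C, θ u) / N ∧
        (Lθ / N) * ((I₁.card : ℝ) - (C.card : ℝ)) ≤ τ k₁ - (∑ u ∈ C, θ u) / N) ∧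
    Gt I₁ = τ k₁ * (S k₁ k₁ / St k₁) ∧
    (∀ C : Finset (Fin N), C.Nonempty → C ⊆ I₁ →
        Gt C - Gt I₁ ≤
          -(Lθ * S k₁ k₁ / St k₁) * (((I₁.card : ℝ) - (C.card : ℝ)) / N)) := by
  have hNpos : (0:ℝ) < N := by
    have : 0 < N := hN
    exact_mod_cast this
  have hτ1pos : 0 < τ k₁ := by
    rw [hτ]
    apply div_pos _ hNpos
    have hne : (Finset.univ.filter fun u => g u = k₁).Nonempty := hI₁ ▸ hI₁ne
    exact_mod_cast Finset.card_pos.mpr hne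
  have hτnn : ∀ j, 0 ≤ τ j := fun j => by rw [hτ]; positivity
  have hStpos : 0 < St k₁ := by
    rw [hSt]
    apply Finset.sum_pos' (fun j _ => mul_nonneg (hSpos k₁ j).le (hτnn j))
    exact ⟨k₁, Finset.mem_univ _, mul_pos (hSpos k₁ k₁) hτ1pos⟩
  have hsumI : ∑ u ∈ I₁, θ u = (I₁.card : ℝ) := by rw [hI₁]; exact hident k₁
  have hτ1 : τ k₁ = (I₁.card : ℝ) / N := by rw [hτ, hI₁]
  have key : ∀ C : Finset (Fin N), C.Nonempty → C ⊆ I₁ →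
      Gt C = ((∑ u ∈ C, θ u) / N) * (S k₁ k₁ / St k₁) ∧
      Rt C 0 k₁ = (∑ u ∈ C, θ u) / N := by
    intro C hCne hCsub
    have hg : ∀ u ∈ C, g u = k₁ := fun u hu => by
      have := hCsub hu; rw [hI₁] at this; exact (Finset.mem_filter.mp this).2
    set x : ℝ := (∑ u ∈ C, θ u) / N with hxdef
    have hRt0k : Rt C 0 k₁ = x := by
      rw [hRt0, Finset.filter_true_of_mem hg]
    have hRt0ne : ∀ b, b ≠ k₁ → Rt C 0 b = 0 := by
      intro b hb
      rw [hRt0]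
      have hempty : C.filter (fun u => g u = b) = ∅ := by
        apply Finset.filter_false_of_mem
        intro u hu h
        exact hb ((hg u hu ▸ h : k₁ = b).symm ▸ rfl)
      rw [hempty, Finset.sum_empty, zero_div]
    have hsum : ∀ b, Rt C 0 b + Rt C 1 b = τ b := by
      intro b
      rw [hRt0, hRt1, hτ, ← hident b, ← add_div]
      congr 1
      rw [Finset.sum_filter, Finset.sum_filter, Finset.sum_filter,
        Finset.sum_add_sum_compl]
    have hxpos : 0 < x := by
      apply div_pos _ hNpos
      exact Finset.sum_pos (fun u _ => lt_of_lt_of_le hLθ (hθ u).1) hCne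
    have hNum : (∑ i, ∑ j, Rt C 0 i * S i j * Rt C 0 j) = x * S k₁ k₁ * x := by
      rw [Finset.sum_eq_single k₁]
      · rw [Finset.sum_eq_single k₁]
        · rw [hRt0k]
        · intro b _ hb; rw [hRt0ne b hb, mul_zero]
        · intro h; exact absurd (Finset.mem_univ k₁) h
      · intro b _ hb
        apply Finset.sum_eq_zero
        intro j _; rw [hRt0ne b hb, zero_mul, zero_mul]
      · intro h; exact absurd (Finset.mem_univ k₁) h
    have hCross : (∑ i, ∑ j, Rt C 0 i * S i j * Rt C 1 j)
        = x * (St k₁ - S k₁ k₁ * x) := by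
      rw [Finset.sum_eq_single k₁]
      · have h1 : ∀ j, Rt C 1 j = τ j - Rt C 0 j := fun j => by linarith [hsum j]
        calc (∑ j, Rt C 0 k₁ * S k₁ j * Rt C 1 j)
            = ∑ j, (x * (S k₁ j * τ j) - x * (S k₁ j * Rt C 0 j)) := by
              apply Finset.sum_congr rfl
              intro j _; rw [hRt0k, h1 j]; ring
          _ = x * St k₁ - x * (S k₁ k₁ * x) := by
              rw [Finset.sum_sub_distrib, ← Finset.mul_sum, ← Finset.mul_sum, hSt]
              congr 2
              rw [Finset.sum_eq_single k₁]
              · rw [hRt0k]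
              · intro b _ hb; rw [hRt0ne b hb, mul_zero]
              · intro h; exact absurd (Finset.mem_univ k₁) h
          _ = x * (St k₁ - S k₁ k₁ * x) := by ring
      · intro b _ hb
        apply Finset.sum_eq_zero
        intro j _; rw [hRt0ne b hb, zero_mul, zero_mul]
      · intro h; exact absurd (Finset.mem_univ k₁) h
    refine ⟨?_, hRt0k⟩
    rw [hGt, hNum, hCross,
      show x * S k₁ k₁ * x + x * (St k₁ - S k₁ k₁ * x) = x * St k₁ by ring]
    field_simp [hxpos.ne', hStpos.ne']
  have hbound : ∀ C : Finset (Fin N), C.Nonempty → C ⊆ I₁ →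
      (Lθ / N) * ((I₁.card : ℝ) - (C.card : ℝ)) ≤ τ k₁ - (∑ u ∈ C, θ u) / N := by
    intro C hCne hCsub
    have hsplit : ∑ u ∈ I₁, θ u = ∑ u ∈ I₁ \ C, θ u + ∑ u ∈ C, θ u :=
      (Finset.sum_sdiff hCsub).symm
    have hcard : ((I₁ \ C).card : ℝ) = (I₁.card : ℝ) - C.card := by
      rw [Finset.card_sdiff_of_subset hCsub]
      have := Finset.card_le_card hCsub
      push_cast [this]
      ring
    have hlow : Lθ * ((I₁.card : ℝ) - C.card) ≤ ∑ u ∈ I₁ \ C, θ u := by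
      rw [← hcard]
      calc Lθ * ((I₁ \ C).card : ℝ) = ∑ _u ∈ I₁ \ C, Lθ := by
            rw [Finset.sum_const, nsmul_eq_mul, mul_comm]
        _ ≤ ∑ u ∈ I₁ \ C, θ u := Finset.sum_le_sum fun u _ => (hθ u).1
    have hfinal : Lθ * ((I₁.card : ℝ) - C.card) ≤ (I₁.card : ℝ) - ∑ u ∈ C, θ u := by
      linarith [hlow, hsplit, hsumI]
    rw [hτ1, show (Lθ / N) * ((I₁.card : ℝ) - (C.card : ℝ))
        = (Lθ * ((I₁.card : ℝ) - C.card)) / N by ring, div_sub_div_same]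
    gcongr
  have hGI : Gt I₁ = τ k₁ * (S k₁ k₁ / St k₁) := by
    rw [(key I₁ hI₁ne Finset.Subset.rfl).1, hsumI, ← hτ1]
  refine ⟨fun C hne hsub => ⟨(key C hne hsub).1, (key C hne hsub).2, hbound C hne hsub⟩,
    hGI, ?_⟩
  intro C hne hsub
  have h1 := (key C hne hsub).1
  have h3 := hbound C hne hsub
  have h3' : (∑ u ∈ C, θ u) / N - τ k₁
      ≤ -(Lθ / N) * ((I₁.card : ℝ) - (C.card : ℝ)) := by linarith
  have hmul := mul_le_mul_of_nonneg_right h3'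
    (div_pos (hSpos k₁ k₁) hStpos).le
  calc Gt C - Gt I₁
      = ((∑ u ∈ C, θ u) / N - τ k₁) * (S k₁ k₁ / St k₁) := by rw [h1, hGI]; ring
    _ ≤ (-(Lθ / N) * ((I₁.card : ℝ) - (C.card : ℝ))) * (S k₁ k₁ / St k₁) := hmul
    _ = -(Lθ * S k₁ k₁ / St k₁) * (((I₁.card : ℝ) - (C.card : ℝ)) / N) := by ring
end

section
/- (Lemma 2, Case n > n_1.) Assume c := S_{11}·min_{2≤i≤K} S̃_{i·} − 2·max_{2≤j≤K} S_{1j}·S̃_{1·} > 0 and set ε := c·τ_1 / (2·U_θ·S̃_{1·}·max_{2≤i,j≤K} S_{ij}). Then for every subset C ⊆ {1,…,N} with I_1 ⊆ C and |C| − n_1 ≤ ε·N, one has G̃(C) − G̃(I_1) ≤ −( 2·S̃_{1·}²/c + K·min_{2≤i≤K} S̃_{i·} / max_{2≤i,j≤K} S_{ij} )^{-1} · (L_θ/N)·(|C| − n_1). -/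
set_option maxHeartbeats 1600000

open BigOperators

lemma key_alg (τ₁ St₁ S₁₁ minSt maxS1 maxS c M t P Q W Kr : ℝ)
    (hτ₁ : 0 < τ₁) (hSt₁ : 0 < St₁) (hS₁₁ : 0 < S₁₁) (hminSt : 0 < minSt)
    (hmaxS1 : 0 < maxS1) (hmaxS : 0 < maxS)
    (hc : c = S₁₁*minSt - 2*maxS1*St₁) (hcpos : 0 < c)
    (hM : M = 2*St₁^2/c + Kr*minSt/maxS) (hKr : 1 ≤ Kr)
    (ht : 0 ≤ t) (htb : 2*St₁*maxS*t ≤ c*τ₁)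
    (hP : P ≤ maxS1*t) (hQ : Q ≤ maxS*t^2) (hW : minSt*t ≤ W) :
    ((S₁₁*τ₁^2 + 2*τ₁*P + Q)*St₁ - S₁₁*τ₁*(τ₁*St₁+W)) * M ≤ -t*((τ₁*St₁+W)*St₁) := by
  have hMpos : 0 < M := by rw [hM]; positivity
  have hM2 : M * c * maxS = 2*St₁^2*maxS + Kr*minSt*c := by
    rw [hM]; field_simp
  have hMge : Kr*minSt/maxS ≤ M := by
    rw [hM]; have : 0 ≤ 2*St₁^2/c := by positivity
    linarith
  have hMge' : Kr*minSt ≤ M*maxS := (div_le_iff₀ hmaxS).mp hMge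
  have hcoef : t*St₁ ≤ S₁₁*τ₁*M := by
    have hA : minSt ≤ M*maxS := by nlinarith
    have hB : c ≤ S₁₁*(M*maxS) := by nlinarith
    nlinarith [mul_le_mul_of_nonneg_left hB hτ₁.le, mul_pos hτ₁ hmaxS,
      mul_pos (mul_pos hS₁₁ hτ₁) hMpos]
  have hW0 : 0 ≤ W := le_trans (by positivity) hW
  have hPQ : 2*τ₁*P + Q ≤ 2*τ₁*(maxS1*t) + maxS*t^2 := by nlinarith
  have step1 : ((S₁₁*τ₁^2 + 2*τ₁*P + Q)*St₁ - S₁₁*τ₁*(τ₁*St₁+W)) * M + t*((τ₁*St₁+W)*St₁)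
      ≤ (2*τ₁*(maxS1*t) + maxS*t^2)*St₁*M - S₁₁*τ₁*W*M + t*τ₁*St₁^2 + t*W*St₁ := by
    have := mul_le_mul_of_nonneg_right hPQ (mul_nonneg hSt₁.le hMpos.le)
    nlinarith [this]
  have step2 : -(S₁₁*τ₁)*W*M + t*W*St₁ ≤ -(S₁₁*τ₁)*(minSt*t)*M + t*(minSt*t)*St₁ := by
    have h := mul_le_mul_of_nonpos_left hW (by linarith : t*St₁ - S₁₁*τ₁*M ≤ 0)
    nlinarith [h]
  have e1 : (M*maxS)*(2*St₁*maxS*t) ≤ (M*maxS)*(c*τ₁) :=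
    mul_le_mul_of_nonneg_left htb (mul_nonneg hMpos.le hmaxS.le)
  have e2 : minSt*(2*St₁*maxS*t) ≤ minSt*(c*τ₁) :=
    mul_le_mul_of_nonneg_left htb hminSt.le
  have e3 : τ₁*(M*c*maxS) = τ₁*(2*St₁^2*maxS + Kr*minSt*c) := by rw [hM2]
  have e4 : 0 ≤ τ₁*minSt*c*(Kr-1) := by
    have : (0:ℝ) ≤ Kr - 1 := by linarith
    positivity
  have hbr2 : (M*(maxS*t*St₁ - c*τ₁) + τ₁*St₁^2 + t*minSt*St₁) * (2*maxS) ≤ 0 := by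
    linarith [e1, e2, e3, e4]
  have hbr : M*(maxS*t*St₁ - c*τ₁) + τ₁*St₁^2 + t*minSt*St₁ ≤ 0 := by
    nlinarith [hbr2, hmaxS]
  have step3 : (2*τ₁*(maxS1*t) + maxS*t^2)*St₁*M - (S₁₁*τ₁)*(minSt*t)*M
      + t*τ₁*St₁^2 + t*(minSt*t)*St₁ ≤ 0 := by
    have expand : (2*τ₁*(maxS1*t) + maxS*t^2)*St₁*M - (S₁₁*τ₁)*(minSt*t)*M
        + t*τ₁*St₁^2 + t*(minSt*t)*St₁
        = t*(M*(maxS*t*St₁ - c*τ₁) + τ₁*St₁^2 + t*minSt*St₁)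
          + t*M*(2*maxS1*St₁ - S₁₁*minSt + c)*τ₁ := by ring
    have hzero : 2*maxS1*St₁ - S₁₁*minSt + c = 0 := by rw [hc]; ring
    rw [expand, hzero]
    have := mul_nonpos_of_nonneg_of_nonpos ht hbr
    nlinarith [this]
  linarith

lemma double_sum_split {K : ℕ} (k₁ : Fin K) (f : Fin K → Fin K → ℝ) :
    ∑ i, ∑ j, f i j = f k₁ k₁ + (∑ j ∈ Finset.univ.erase k₁, f k₁ j)
      + (∑ i ∈ Finset.univ.erase k₁, f i k₁)
      + ∑ i ∈ Finset.univ.erase k₁, ∑ j ∈ Finset.univ.erase k₁, f i j := by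
  rw [← Finset.add_sum_erase _ _ (Finset.mem_univ k₁)]
  rw [← Finset.add_sum_erase _ (fun j => f k₁ j) (Finset.mem_univ k₁)]
  rw [Finset.sum_congr rfl
    (fun i _ => (Finset.add_sum_erase _ (fun j => f i j) (Finset.mem_univ k₁)).symm)]
  rw [Finset.sum_add_distrib]
  ring

theorem stmt_9 (N K : ℕ) (hN : 1 ≤ N) (hK : 2 ≤ K)
    (g : Fin N → Fin K)
    (k₁ : Fin K) (hk₁ : (k₁ : ℕ) = 0)
    (S : Matrix (Fin K) (Fin K) ℝ) (hSsymm : S.IsSymm) (hSpos : ∀ i j, 0 < S i j)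
    (τ : Fin K → ℝ)
    (hτ : ∀ k, τ k = ((Finset.univ.filter fun u => g u = k).card : ℝ) / N)
    (St : Fin K → ℝ) (hSt : ∀ i, St i = ∑ j, S i j * τ j)
    (I₁ : Finset (Fin N)) (hI₁ : I₁ = Finset.univ.filter fun u => g u = k₁)
    (hI₁ne : I₁.Nonempty)
    (θ : Fin N → ℝ) (Lθ Uθ : ℝ) (hLθ : 0 < Lθ)
    (hθ : ∀ u, Lθ ≤ θ u ∧ θ u ≤ Uθ)
    (hident : ∀ k : Fin K, ∑ u ∈ Finset.univ.filter (fun u => g u = k), θ u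
        = ((Finset.univ.filter fun u => g u = k).card : ℝ))
    (Rt : Finset (Fin N) → Fin 2 → Fin K → ℝ)
    (hRt0 : ∀ C b, Rt C 0 b = (∑ u ∈ C.filter fun u => g u = b, θ u) / N)
    (hRt1 : ∀ C b, Rt C 1 b = (∑ u ∈ (Cᶜ).filter fun u => g u = b, θ u) / N)
    (Gt : Finset (Fin N) → ℝ)
    (hGt : ∀ C, Gt C = (∑ i, ∑ j, Rt C 0 i * S i j * Rt C 0 j) /
        ((∑ i, ∑ j, Rt C 0 i * S i j * Rt C 0 j)
          + ∑ i, ∑ j, Rt C 0 i * S i j * Rt C 1 j))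
    (minSt : ℝ) (hminSt : ∀ i : Fin K, i ≠ k₁ → minSt ≤ St i)
    (hminSt' : ∃ i : Fin K, i ≠ k₁ ∧ minSt = St i)
    (maxS1 : ℝ) (hmaxS1 : ∀ j : Fin K, j ≠ k₁ → S k₁ j ≤ maxS1)
    (hmaxS1' : ∃ j : Fin K, j ≠ k₁ ∧ maxS1 = S k₁ j)
    (maxS : ℝ) (hmaxS : ∀ i j : Fin K, i ≠ k₁ → j ≠ k₁ → S i j ≤ maxS)
    (hmaxS' : ∃ i j : Fin K, i ≠ k₁ ∧ j ≠ k₁ ∧ maxS = S i j)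
    (c : ℝ) (hc : c = S k₁ k₁ * minSt - 2 * maxS1 * St k₁) (hcpos : 0 < c)
    (ε : ℝ) (hε : ε = c * τ k₁ / (2 * Uθ * St k₁ * maxS)) :
    ∀ C : Finset (Fin N), I₁ ⊆ C →
      (C.card : ℝ) - (I₁.card : ℝ) ≤ ε * N →
      Gt C - Gt I₁ ≤
        -(2 * St k₁ ^ 2 / c + K * minSt / maxS)⁻¹ *
          ((Lθ / N) * ((C.card : ℝ) - (I₁.card : ℝ))) := by
  intro C hsub hcard
  have hNpos : (0:ℝ) < N := by exact_mod_cast hN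
  have hθpos : ∀ u, 0 < θ u := fun u => lt_of_lt_of_le hLθ (hθ u).1
  have hτnn : ∀ k, 0 ≤ τ k := by
    intro k; rw [hτ]; positivity
  have hτ₁pos : 0 < τ k₁ := by
    rw [hτ]
    have : 0 < (Finset.univ.filter fun u => g u = k₁).card := by
      rw [← hI₁]; exact hI₁ne.card_pos
    have h' : (0:ℝ) < (Finset.univ.filter fun u => g u = k₁).card := by exact_mod_cast this
    exact div_pos h' hNpos
  have hStpos : ∀ i, 0 < St i := by
    intro i
    rw [hSt]
    refine Finset.sum_pos' (fun j _ => mul_nonneg (hSpos i j).le (hτnn j)) ?_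
    exact ⟨k₁, Finset.mem_univ _, mul_pos (hSpos i k₁) hτ₁pos⟩
  obtain ⟨i₀, hi₀, hmeq⟩ := hminSt'
  have hminStpos : 0 < minSt := hmeq ▸ hStpos i₀
  obtain ⟨j₀, hj₀, hm1eq⟩ := hmaxS1'
  have hmaxS1pos : 0 < maxS1 := hm1eq ▸ hSpos k₁ j₀
  obtain ⟨i₂, j₂, hi₂, hj₂, hmSeq⟩ := hmaxS'
  have hmaxSpos : 0 < maxS := hmSeq ▸ hSpos i₂ j₂
  have hUθpos : 0 < Uθ := lt_of_lt_of_le hLθ (le_trans (hθ ⟨0, hN⟩).1 (hθ ⟨0, hN⟩).2)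
  -- block-sum identity
  have hblock : ∀ (C' : Finset (Fin N)) (b : Fin K), Rt C' 0 b + Rt C' 1 b = τ b := by
    intro C' b
    rw [hRt0, hRt1, ← add_div, hτ, ← hident b]
    congr 1
    have h1 : (Finset.univ.filter fun u => g u = b).filter (fun u => u ∈ C')
        = C'.filter (fun u => g u = b) := by
      ext u; simp [Finset.mem_filter, and_comm]
    have h2 : (Finset.univ.filter fun u => g u = b).filter (fun u => ¬ u ∈ C')
        = (C'ᶜ).filter (fun u => g u = b) := by
      ext u; simp [Finset.mem_filter, Finset.mem_compl, and_comm]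
    rw [← h1, ← h2]
    exact Finset.sum_filter_add_sum_filter_not _ _ _
  -- denominator identity
  have hden : ∀ C' : Finset (Fin N),
      (∑ i, ∑ j, Rt C' 0 i * S i j * Rt C' 0 j)
        + ∑ i, ∑ j, Rt C' 0 i * S i j * Rt C' 1 j = ∑ i, Rt C' 0 i * St i := by
    intro C'
    rw [← Finset.sum_add_distrib]
    refine Finset.sum_congr rfl fun i _ => ?_
    rw [← Finset.sum_add_distrib, hSt, Finset.mul_sum]
    refine Finset.sum_congr rfl fun j _ => ?_
    have h := hblock C' j
    linear_combination Rt C' 0 i * S i j * h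
  have hfilterC : C.filter (fun u => g u = k₁) = I₁ := by
    ext u
    simp only [Finset.mem_filter, hI₁, Finset.mem_univ, true_and]
    constructor
    · exact fun h => h.2
    · intro h
      exact ⟨hsub (by rw [hI₁]; simp [h]), h⟩
  have hRtC0k₁ : Rt C 0 k₁ = τ k₁ := by
    rw [hRt0, hτ, hfilterC, hI₁, hident k₁]
  have hfilterI : ∀ b, I₁.filter (fun u => g u = b) = if b = k₁ then I₁ else ∅ := by
    intro b
    split_ifs with hb
    · subst hb
      ext u; simp only [Finset.mem_filter, hI₁, Finset.mem_univ, true_and, and_iff_left_iff_imp]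
      exact fun h => h
    · ext u
      simp only [Finset.mem_filter, hI₁, Finset.mem_univ, true_and, Finset.notMem_empty,
        iff_false, not_and]
      intro h1 h2; exact hb (h2 ▸ h1 ▸ rfl)
  have hRtI0k₁ : Rt I₁ 0 k₁ = τ k₁ := by
    rw [hRt0, hτ, hfilterI, if_pos rfl, hI₁, hident k₁]
  have hRtI0 : ∀ b, b ≠ k₁ → Rt I₁ 0 b = 0 := by
    intro b hb
    rw [hRt0, hfilterI, if_neg hb]
    simp
  -- value of Gt I₁
  have hAI : (∑ i, ∑ j, Rt I₁ 0 i * S i j * Rt I₁ 0 j) = τ k₁ * S k₁ k₁ * τ k₁ := by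
    rw [Finset.sum_eq_single k₁]
    · rw [Finset.sum_eq_single k₁]
      · rw [hRtI0k₁]
      · intro b _ hb; rw [hRtI0 b hb]; ring
      · intro h; exact absurd (Finset.mem_univ k₁) h
    · intro b _ hb
      rw [Finset.sum_eq_zero]
      intro j _; rw [hRtI0 b hb]; ring
    · intro h; exact absurd (Finset.mem_univ k₁) h
  have hDI : (∑ i, Rt I₁ 0 i * St i) = τ k₁ * St k₁ := by
    rw [Finset.sum_eq_single k₁]
    · rw [hRtI0k₁]
    · intro b _ hb; rw [hRtI0 b hb]; ring
    · intro h; exact absurd (Finset.mem_univ k₁) h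
  have hGtI : Gt I₁ = S k₁ k₁ * τ k₁ / St k₁ := by
    rw [hGt, hden, hAI, hDI]
    rw [div_eq_div_iff (mul_pos hτ₁pos (hStpos k₁)).ne' (hStpos k₁).ne']
    ring
  -- decompose Gt C
  set T : Finset (Fin K) := Finset.univ.erase k₁ with hT
  set t : ℝ := ∑ b ∈ T, Rt C 0 b with htdef
  set P : ℝ := ∑ b ∈ T, S k₁ b * Rt C 0 b with hPdef
  set W : ℝ := ∑ b ∈ T, St b * Rt C 0 b with hWdef
  set Q : ℝ := ∑ i ∈ T, ∑ j ∈ T, Rt C 0 i * S i j * Rt C 0 j with hQdef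
  have hrnn : ∀ b, 0 ≤ Rt C 0 b := by
    intro b
    rw [hRt0]
    have : 0 ≤ ∑ u ∈ C.filter fun u => g u = b, θ u :=
      Finset.sum_nonneg fun u _ => (hθpos u).le
    positivity
  have hAC : (∑ i, ∑ j, Rt C 0 i * S i j * Rt C 0 j)
      = S k₁ k₁ * τ k₁^2 + 2 * τ k₁ * P + Q := by
    rw [double_sum_split k₁ (fun i j => Rt C 0 i * S i j * Rt C 0 j)]
    rw [hRtC0k₁]
    have h1 : ∑ j ∈ T, τ k₁ * S k₁ j * Rt C 0 j = τ k₁ * P := by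
      rw [hPdef, Finset.mul_sum]
      exact Finset.sum_congr rfl fun j _ => by ring
    have h2 : ∑ i ∈ T, Rt C 0 i * S i k₁ * τ k₁ = τ k₁ * P := by
      rw [hPdef, Finset.mul_sum]
      refine Finset.sum_congr rfl fun i _ => ?_
      rw [← hSsymm.apply i k₁]
      ring
    rw [h1, h2, hQdef]
    ring
  have hDC : (∑ i, Rt C 0 i * St i) = τ k₁ * St k₁ + W := by
    rw [← Finset.add_sum_erase _ (fun i => Rt C 0 i * St i) (Finset.mem_univ k₁), hRtC0k₁]
    rw [hWdef]
    congr 1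
    exact Finset.sum_congr rfl fun i _ => by ring
  -- bounds on t, P, Q, W
  have ht0 : 0 ≤ t := Finset.sum_nonneg fun b _ => hrnn b
  have hPb : P ≤ maxS1 * t := by
    rw [hPdef, htdef, Finset.mul_sum]
    refine Finset.sum_le_sum fun b hb => ?_
    exact mul_le_mul_of_nonneg_right (hmaxS1 b (Finset.ne_of_mem_erase hb)) (hrnn b)
  have hWb : minSt * t ≤ W := by
    rw [hWdef, htdef, Finset.mul_sum]
    refine Finset.sum_le_sum fun b hb => ?_
    exact mul_le_mul_of_nonneg_right (hminSt b (Finset.ne_of_mem_erase hb)) (hrnn b)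
  have hQb : Q ≤ maxS * t^2 := by
    have : Q ≤ ∑ i ∈ T, ∑ j ∈ T, maxS * (Rt C 0 i * Rt C 0 j) := by
      refine Finset.sum_le_sum fun i hi => Finset.sum_le_sum fun j hj => ?_
      have h1 : Rt C 0 i * S i j * Rt C 0 j = S i j * (Rt C 0 i * Rt C 0 j) := by ring
      rw [h1]
      exact mul_le_mul_of_nonneg_right
        (hmaxS i j (Finset.ne_of_mem_erase hi) (Finset.ne_of_mem_erase hj))
        (mul_nonneg (hrnn i) (hrnn j))
    calc Q ≤ ∑ i ∈ T, ∑ j ∈ T, maxS * (Rt C 0 i * Rt C 0 j) := this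
    _ = maxS * (t * t) := by
        rw [htdef, Finset.sum_mul_sum, Finset.mul_sum]
        refine Finset.sum_congr rfl fun i _ => ?_
        rw [Finset.mul_sum]
    _ = maxS * t^2 := by ring
  -- t vs cardinality
  have hsum_fib : ∑ b, ∑ u ∈ C.filter fun u => g u = b, θ u = ∑ u ∈ C, θ u :=
    Finset.sum_fiberwise _ _ _
  have htN : t * N = ∑ u ∈ C \ I₁, θ u := by
    have hsplit : (∑ u ∈ C.filter fun u => g u = k₁, θ u)
        + ∑ b ∈ T, ∑ u ∈ C.filter fun u => g u = b, θ u = ∑ u ∈ C, θ u := by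
      rw [← hsum_fib]
      exact Finset.add_sum_erase _ (fun b => ∑ u ∈ C.filter fun u => g u = b, θ u)
        (Finset.mem_univ k₁)
    have hsd : (∑ u ∈ C \ I₁, θ u) + ∑ u ∈ I₁, θ u = ∑ u ∈ C, θ u :=
      Finset.sum_sdiff hsub
    have ht2 : t * N = ∑ b ∈ T, ∑ u ∈ C.filter fun u => g u = b, θ u := by
      rw [htdef, Finset.sum_mul]
      refine Finset.sum_congr rfl fun b _ => ?_
      rw [hRt0, div_mul_cancel₀]
      exact hNpos.ne'
    rw [ht2]
    have := hfilterC
    rw [hfilterC] at hsplit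
    linarith
  have hcardsd : ((C \ I₁).card : ℝ) = (C.card : ℝ) - I₁.card := by
    rw [Finset.card_sdiff_of_subset hsub]
    have := Finset.card_le_card hsub
    push_cast [Nat.cast_sub this]
    ring
  set d : ℝ := (C.card : ℝ) - I₁.card with hd
  have hd0 : 0 ≤ d := by
    rw [← hcardsd]; positivity
  have htlow : Lθ * d ≤ t * N := by
    rw [htN, ← hcardsd]
    calc Lθ * ((C \ I₁).card : ℝ) = (C \ I₁).card • Lθ := by
          rw [nsmul_eq_mul]; ring
    _ ≤ ∑ u ∈ C \ I₁, θ u := Finset.card_nsmul_le_sum _ _ _ fun u _ => (hθ u).1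
  have htup : t * N ≤ Uθ * d := by
    rw [htN, ← hcardsd]
    calc (∑ u ∈ C \ I₁, θ u) ≤ (C \ I₁).card • Uθ :=
          Finset.sum_le_card_nsmul _ _ _ fun u _ => (hθ u).2
    _ = Uθ * ((C \ I₁).card : ℝ) := by rw [nsmul_eq_mul]; ring
  have htb : 2 * St k₁ * maxS * t ≤ c * τ k₁ := by
    have h1 : t * N ≤ Uθ * (ε * N) := le_trans htup
      (mul_le_mul_of_nonneg_left hcard hUθpos.le)
    have h2 : t ≤ Uθ * ε := by
      have := (mul_le_mul_iff_of_pos_right hNpos).mp (by linarith [h1] : t * N ≤ (Uθ * ε) * N)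
      exact this
    have h3 : Uθ * ε = c * τ k₁ / (2 * St k₁ * maxS) := by
      rw [hε]
      field_simp [hUθpos.ne', (hStpos k₁).ne', hmaxSpos.ne']
    rw [h3] at h2
    have h4 : (0:ℝ) < 2 * St k₁ * maxS := mul_pos (mul_pos two_pos (hStpos k₁)) hmaxSpos
    calc 2 * St k₁ * maxS * t ≤ 2 * St k₁ * maxS * (c * τ k₁ / (2 * St k₁ * maxS)) :=
          mul_le_mul_of_nonneg_left h2 h4.le
    _ = c * τ k₁ := by rw [mul_div_assoc']; exact mul_div_cancel_left₀ _ h4.ne'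
  -- assemble
  set M : ℝ := 2 * St k₁ ^ 2 / c + K * minSt / maxS with hMdef
  have hKr : (1:ℝ) ≤ (K:ℝ) := by
    have : (2:ℝ) ≤ (K:ℝ) := by exact_mod_cast hK
    linarith
  have hMpos : 0 < M := by rw [hMdef]; positivity
  have key := key_alg (τ k₁) (St k₁) (S k₁ k₁) minSt maxS1 maxS c M t P Q W (K:ℝ)
    hτ₁pos (hStpos k₁) (hSpos k₁ k₁) hminStpos hmaxS1pos hmaxSpos
    hc hcpos hMdef hKr ht0 htb hPb hQb hWb
  have hW0 : 0 ≤ W := le_trans (mul_nonneg hminStpos.le ht0) hWb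
  have hDpos : 0 < τ k₁ * St k₁ + W := by
    have := mul_pos hτ₁pos (hStpos k₁); linarith
  have hGtC : Gt C = (S k₁ k₁ * τ k₁^2 + 2 * τ k₁ * P + Q) / (τ k₁ * St k₁ + W) := by
    rw [hGt, hden, hAC, hDC]
  have hdiff : Gt C - Gt I₁
      = ((S k₁ k₁ * τ k₁^2 + 2 * τ k₁ * P + Q) * St k₁
          - S k₁ k₁ * τ k₁ * (τ k₁ * St k₁ + W)) / ((τ k₁ * St k₁ + W) * St k₁) := by
    rw [hGtC, hGtI]
    rw [div_sub_div _ _ hDpos.ne' (hStpos k₁).ne']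
    congr 1
    ring
  have hstep : Gt C - Gt I₁ ≤ (-t) / M := by
    rw [hdiff, div_le_div_iff₀ (mul_pos hDpos (hStpos k₁)) hMpos]
    exact key
  have hfinal : (-t) / M ≤ -M⁻¹ * (Lθ / N * d) := by
    have h1 : Lθ / N * d ≤ t := by
      rw [div_mul_eq_mul_div, div_le_iff₀ hNpos]
      calc Lθ * d ≤ t * N := htlow
      _ = t * N := rfl
    have h2 : M⁻¹ * (Lθ / N * d) ≤ M⁻¹ * t :=
      mul_le_mul_of_nonneg_left h1 (inv_nonneg.mpr hMpos.le)
    have h3 : (-t) / M = -(M⁻¹ * t) := by rw [neg_div, div_eq_inv_mul]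
    rw [h3]
    linarith
  exact le_trans hstep hfinal
end
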